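/- arXiv:1806.01122 — 8 statements merged into one kernel-verified Lean document; each statement's English description precedes it below -/
import Mathlib

section
/- Let z ∈ ℂ with z ∉ (-∞,0] and z ≠ 1, and let a ∈ ℂ. Then the function x ↦ f(z,x,a) is analytic in a neighborhood of x = 0 and for every n ≥ 0 its n-th Maclaurin coefficient satisfies C_n(z,a) = c_n(z) − z^{1−a} p_n(z,a), where p_n(z,a) := Σ_{k=0}^n c_{n−k}(z) (a−1)^k / k! and z^{1−a} is the principal power. (In particular, p_n(z,a) is a polynomial of degree n in a.) -/
open scoped BigOperators

/-- `f(z,x,a) = (1 - (z e^{-x})^{1-a})/(1 - z e^{-x})`, with the removable singularity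
(where `z e^{-x} = 1`) filled by the limiting value `1 - a`.  Principal powers. -/
noncomputable def lerchF (z a x : ℂ) : ℂ :=
  if z * Complex.exp (-x) = 1 then 1 - a
  else (1 - (z * Complex.exp (-x)) ^ ((1 : ℂ) - a)) / (1 - z * Complex.exp (-x))

/-- The `n`-th Maclaurin (Taylor at `0`) coefficient of `g`. -/
noncomputable def taylorCoeff (g : ℂ → ℂ) (n : ℕ) : ℂ :=
  iteratedDeriv n g 0 / (n.factorial : ℂ)

/-- `c_n(z)`: the `n`-th Maclaurin coefficient of `x ↦ 1/(1 - z e^{-x})`. -/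
noncomputable def cCoeff (z : ℂ) (n : ℕ) : ℂ :=
  taylorCoeff (fun x => 1 / (1 - z * Complex.exp (-x))) n

/-- `p_n(z,a) = ∑_{k=0}^n c_{n-k}(z) (a-1)^k / k!`. -/
noncomputable def pPoly (z a : ℂ) (n : ℕ) : ℂ :=
  ∑ k ∈ Finset.range (n + 1), cCoeff z (n - k) * (a - 1) ^ k / (k.factorial : ℂ)

/-- Taylor coefficients agree with power series coefficients. -/
lemma taylorCoeff_eq_coeff {f : ℂ → ℂ} {p : FormalMultilinearSeries ℂ ℂ ℂ}
    (h : HasFPowerSeriesAt f p 0) (n : ℕ) : taylorCoeff f n = p.coeff n := by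
  obtain ⟨r, hr⟩ := h
  have h2 : iteratedDeriv n f 0 = (n.factorial : ℂ) * p.coeff n := by
    rw [iteratedDeriv_eq_iteratedFDeriv, ← hr.factorial_smul (1 : ℂ) n]
    simp only [nsmul_eq_mul, FormalMultilinearSeries.coeff]
    norm_num
  rw [taylorCoeff, h2,
    mul_div_cancel_left₀ _ (by exact_mod_cast n.factorial_ne_zero : (n.factorial : ℂ) ≠ 0)]

theorem stmt0 (z a : ℂ) (hz : ∀ x : ℝ, x ≤ 0 → z ≠ (x : ℂ)) (hz1 : z ≠ 1) :
    AnalyticAt ℂ (lerchF z a) 0 ∧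
      ∀ n : ℕ, taylorCoeff (lerchF z a) n
        = cCoeff z n - z ^ ((1 : ℂ) - a) * pPoly z a n := by
  have hz0 : z ≠ 0 := by
    intro h
    exact hz 0 le_rfl (by simp [h])
  have h1 : (1 : ℂ) - z ≠ 0 := sub_ne_zero.mpr (Ne.symm hz1)
  set c : ℂ → ℂ := fun x => (1 - z * Complex.exp (-x))⁻¹ with hc_def
  have hc : AnalyticAt ℂ c 0 := by
    apply AnalyticAt.inv
    · exact analyticAt_const.sub (analyticAt_const.mul
        (analyticAt_cexp.comp (analyticAt_id.neg)))
    · simpa using h1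
  obtain ⟨q, hq⟩ := hc
  have hcc : (fun x : ℂ => 1 / (1 - z * Complex.exp (-x))) = c := by
    funext x; rw [one_div]
  have hcoeff : ∀ n, cCoeff z n = q.coeff n := by
    intro n; rw [cCoeff, hcc, taylorCoeff_eq_coeff hq]
  -- arg z is strictly between -π and π
  have harg : Complex.arg z < Real.pi := by
    rcases lt_or_eq_of_le (Complex.arg_le_pi z) with h | h
    · exact h
    · exfalso
      obtain ⟨hre, him⟩ := Complex.arg_eq_pi_iff.mp h
      refine hz z.re hre.le ?_
      exact Complex.ext rfl (by simpa using him)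
  have harg' : -Real.pi < Complex.arg z := Complex.neg_pi_lt_arg z
  -- a radius of summability for q
  obtain ⟨r, hr⟩ := id hq
  obtain ⟨r', hr'0, hr'⟩ := ENNReal.lt_iff_exists_nnreal_btwn.mp hr.r_pos
  have hsumq : Summable fun n => ‖q n‖ * (r' : ℝ) ^ n :=
    q.summable_norm_mul_pow (lt_of_lt_of_le hr' hr.r_le)
  -- the target coefficients
  set C : ℕ → ℂ := fun n => cCoeff z n - z ^ ((1 : ℂ) - a) * pPoly z a n with hC_def
  set P : FormalMultilinearSeries ℂ ℂ ℂ := FormalMultilinearSeries.ofScalars ℂ C with hP_def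
  have hPcoeff : ∀ n, P.coeff n = C n := by
    intro n
    simp [hP_def, FormalMultilinearSeries.ofScalars, FormalMultilinearSeries.coeff,
      List.prod_ofFn]
  -- eventual conditions near 0
  have ev1 : ∀ᶠ x : ℂ in nhds 0, ‖x‖ < (r' : ℝ) := by
    have ht : Filter.Tendsto (fun x : ℂ => ‖x‖) (nhds 0) (nhds 0) := by
      simpa using (continuous_norm.tendsto (0 : ℂ))
    exact ht.eventually_lt_const (by exact_mod_cast hr'0)
  have ev2 : ∀ᶠ x : ℂ in nhds 0, z * Complex.exp (-x) ≠ 1 := by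
    have hcont : ContinuousAt (fun x : ℂ => z * Complex.exp (-x)) 0 :=
      (continuous_const.mul (Complex.continuous_exp.comp continuous_neg)).continuousAt
    have : z * Complex.exp (-(0 : ℂ)) ≠ 1 := by simpa using hz1
    exact hcont.eventually_ne this
  have ev3 : ∀ᶠ x : ℂ in nhds 0,
      (Complex.log z - x).im ∈ Set.Ioo (-Real.pi) Real.pi := by
    have hcont : ContinuousAt (fun x : ℂ => (Complex.log z - x).im) 0 :=
      (Complex.continuous_im.comp (continuous_const.sub continuous_id)).continuousAt
    have h0 : (Complex.log z - (0 : ℂ)).im ∈ Set.Ioo (-Real.pi) Real.pi := by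
      simp [Complex.log_im, harg, harg']
    exact hcont.eventually_mem (Ioo_mem_nhds h0.1 h0.2)
  have ev4 := hasFPowerSeriesAt_iff.mp hq
  -- main eventual HasSum statement
  have evMain : ∀ᶠ x : ℂ in nhds 0,
      HasSum (fun n => x ^ n • P.coeff n) (lerchF z a ((0 : ℂ) + x)) := by
    filter_upwards [ev1, ev2, ev3, ev4] with x hx1 hx2 hx3 hx4
    rw [zero_add] at hx4 ⊢
    -- rewrite lerchF
    have hlog : Complex.log (z * Complex.exp (-x)) = Complex.log z - x := by
      have : z * Complex.exp (-x) = Complex.exp (Complex.log z - x) := by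
        rw [sub_eq_add_neg, Complex.exp_add, Complex.exp_log hz0]
      rw [this, Complex.log_exp hx3.1 hx3.2.le]
    have hne0 : z * Complex.exp (-x) ≠ 0 := mul_ne_zero hz0 (Complex.exp_ne_zero _)
    have hpow : (z * Complex.exp (-x)) ^ ((1 : ℂ) - a)
        = z ^ ((1 : ℂ) - a) * Complex.exp ((a - 1) * x) := by
      rw [Complex.cpow_def_of_ne_zero hne0, hlog, Complex.cpow_def_of_ne_zero hz0]
      rw [← Complex.exp_add]
      ring_nf
    have hlerch : lerchF z a x = c x - z ^ ((1 : ℂ) - a) *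
        (Complex.exp ((a - 1) * x) * c x) := by
      rw [lerchF, if_neg hx2, hpow, div_eq_mul_inv, hc_def]
      ring
    -- the two series
    have hsq : HasSum (fun n => x ^ n * q.coeff n) (c x) := by
      have := hx4
      simpa [smul_eq_mul] using this
    have hsqn : Summable fun n => ‖x ^ n * q.coeff n‖ := by
      apply Summable.of_nonneg_of_le (fun n => norm_nonneg _) _ hsumq
      intro n
      rw [norm_mul, norm_pow]
      calc ‖x‖ ^ n * ‖q.coeff n‖ ≤ (r' : ℝ) ^ n * ‖q.coeff n‖ := by
            apply mul_le_mul_of_nonneg_right (pow_le_pow_left₀ (norm_nonneg _) hx1.le n)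
              (norm_nonneg _)
        _ = ‖q n‖ * (r' : ℝ) ^ n := by
            rw [q.norm_apply_eq_norm_coef]; ring
    have hse : HasSum (fun k => x ^ k * ((a - 1) ^ k / (k.factorial : ℂ)))
        (Complex.exp ((a - 1) * x)) := by
      have h := NormedSpace.expSeries_div_hasSum_exp ((a - 1) * x)
      rw [← Complex.exp_eq_exp_ℂ] at h
      convert h using 2 with k
      · rfl
      rw [mul_pow]; ring
    have hsen : Summable fun k => ‖x ^ k * ((a - 1) ^ k / (k.factorial : ℂ))‖ := by
      have h := Real.summable_pow_div_factorial ‖x * (a - 1)‖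
      convert h using 2 with k
      rw [norm_mul, norm_pow, norm_div, norm_pow, norm_mul, mul_pow, Complex.norm_natCast]
      ring
    -- Cauchy product
    have hprod : HasSum
        (fun n => ∑ k ∈ Finset.range (n + 1),
          (x ^ k * ((a - 1) ^ k / (k.factorial : ℂ))) * (x ^ (n - k) * q.coeff (n - k)))
        (Complex.exp ((a - 1) * x) * c x) := by
      have h := hasSum_sum_range_mul_of_summable_norm hsen hsqn
      rwa [hse.tsum_eq, hsq.tsum_eq] at h
    have hprod' : HasSum (fun n => x ^ n * pPoly z a n)
        (Complex.exp ((a - 1) * x) * c x) := by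
      convert hprod using 2 with n
      rw [pPoly, Finset.mul_sum]
      apply Finset.sum_congr rfl
      intro k hk
      have hkn : k ≤ n := Nat.lt_succ_iff.mp (Finset.mem_range.mp hk)
      rw [hcoeff (n - k)]
      have hxn : x ^ n = x ^ k * x ^ (n - k) := by
        rw [← pow_add, Nat.add_sub_cancel' hkn]
      rw [hxn]
      ring
    have hfinal : HasSum (fun n => x ^ n * C n) (lerchF z a x) := by
      rw [hlerch]
      have h := hsq.sub (hprod'.mul_left (z ^ ((1 : ℂ) - a)))
      convert h using 2 with n
      · rfl
      rw [hC_def]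
      simp only [hcoeff]
      ring
    simp only [hPcoeff, smul_eq_mul]
    exact hfinal
  have hP : HasFPowerSeriesAt (lerchF z a) P 0 := hasFPowerSeriesAt_iff.mpr evMain
  refine ⟨hP.analyticAt, fun n => ?_⟩
  rw [taylorCoeff_eq_coeff hP, hPcoeff]
end

section
/- Let z ∈ ℂ with z ∉ (-∞,0] and z ≠ 1, and let a ∈ ℂ. Then the Maclaurin coefficients C_n(z,a) of x ↦ f(z,x,a) satisfy C_0(z,a) = (1 − z^{1−a})/(1 − z) and, for every n ≥ 1, the recurrence C_n(z,a) = (z/(1−z)) [ Σ_{k=0}^{n−1} ((−1)^{n−k}/(n−k)!) C_k(z,a) − (a−1)^n/(n! z^a) ], where z^{1−a} and z^a are principal powers. -/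
open scoped BigOperators

open Filter Complex FormalMultilinearSeries


lemma myOfScalars_coeff (c : ℕ → ℂ) (n : ℕ) :
    (FormalMultilinearSeries.ofScalars ℂ c).coeff n = c n := by
  simp [FormalMultilinearSeries.coeff, FormalMultilinearSeries.ofScalars, Pi.one_def, List.ofFn_const]

lemma myTaylorCoeff {f : ℂ → ℂ} {p : FormalMultilinearSeries ℂ ℂ ℂ}
    (h : HasFPowerSeriesAt f p 0) (n : ℕ) :
    iteratedDeriv n f 0 / (n.factorial : ℂ) = p.coeff n := by
  obtain ⟨r, hb⟩ := h
  have h1 := hb.factorial_smul (y := (1 : ℂ)) n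
  rw [iteratedDeriv_eq_iteratedFDeriv, ← h1, nsmul_eq_mul]
  rw [mul_div_cancel_left₀ _ (by exact_mod_cast n.factorial_ne_zero)]
  rfl

lemma myExpAff (u v c : ℂ) :
    HasFPowerSeriesAt (fun x => u + v * Complex.exp (c * x))
      (FormalMultilinearSeries.ofScalars ℂ
        (fun n => if n = 0 then u + v else v * c ^ n / (n.factorial : ℂ))) 0 := by
  rw [hasFPowerSeriesAt_iff]
  filter_upwards with y
  have base : HasSum (fun n : ℕ => v * ((c * y) ^ n / (n.factorial : ℂ)))
      (v * Complex.exp (c * y)) := by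
    have h0 := NormedSpace.exp_series_hasSum_exp' (𝕂 := ℂ) (c * y)
    rw [← Complex.exp_eq_exp_ℂ] at h0
    have := h0.mul_left v
    convert this using 2 with n
    · rfl
    rw [smul_eq_mul]
    ring
  have h2 := base.update 0 (u + v)
  have hfe : (fun n : ℕ => y ^ n •
      (FormalMultilinearSeries.ofScalars ℂ
        (fun n => if n = 0 then u + v else v * c ^ n / (n.factorial : ℂ))).coeff n)
      = Function.update (fun n : ℕ => v * ((c * y) ^ n / (n.factorial : ℂ))) 0 (u + v) := by
    funext n
    rcases n with _ | m
    · simp [myOfScalars_coeff]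
    · rw [Function.update_of_ne (Nat.succ_ne_zero m), myOfScalars_coeff, smul_eq_mul]
      simp only [Nat.succ_eq_add_one, Nat.add_eq_zero, one_ne_zero, and_false, if_false]
      rw [mul_pow, div_eq_mul_inv, div_eq_mul_inv]
      ring
  rw [hfe]
  convert h2 using 1
  simp

lemma mySummable {f : ℂ → ℂ} {p : FormalMultilinearSeries ℂ ℂ ℂ}
    (h : HasFPowerSeriesAt f p 0) :
    ∀ᶠ y in nhds (0 : ℂ), Summable (fun n => ‖y ^ n • p.coeff n‖) := by
  obtain ⟨r, hb⟩ := h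
  obtain ⟨r', hr'0, hr'⟩ := ENNReal.lt_iff_exists_nnreal_btwn.mp hb.r_pos
  have hball : Metric.ball (0 : ℂ) r' ∈ nhds (0 : ℂ) := by
    apply Metric.ball_mem_nhds
    exact_mod_cast hr'0
  filter_upwards [hball] with y hy
  have S : Summable (fun n => ‖p n‖ * (r' : ℝ) ^ n) :=
    p.summable_norm_mul_pow (hr'.trans_le hb.r_le)
  apply S.of_nonneg_of_le (fun n => norm_nonneg _)
  intro n
  have hy' : ‖y‖ ≤ (r' : ℝ) := by
    have := Metric.mem_ball.mp hy
    simpa using this.le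
  have hc : ‖p.coeff n‖ ≤ ‖p n‖ := by
    have := (p n).le_opNorm (fun _ => (1 : ℂ))
    simpa using this
  calc ‖y ^ n • p.coeff n‖ = ‖y‖ ^ n * ‖p.coeff n‖ := by
        rw [norm_smul, norm_pow]
    _ ≤ (r' : ℝ) ^ n * ‖p n‖ := by
        apply mul_le_mul (pow_le_pow_left₀ (norm_nonneg _) hy' n) hc (norm_nonneg _)
        positivity
    _ = ‖p n‖ * (r' : ℝ) ^ n := mul_comm _ _

lemma myMul {f g : ℂ → ℂ} {p q : FormalMultilinearSeries ℂ ℂ ℂ}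
    (hp : HasFPowerSeriesAt f p 0) (hq : HasFPowerSeriesAt g q 0) :
    HasFPowerSeriesAt (fun x => f x * g x)
      (FormalMultilinearSeries.ofScalars ℂ
        (fun n => ∑ k ∈ Finset.range (n + 1), p.coeff k * q.coeff (n - k))) 0 := by
  have hp' := hasFPowerSeriesAt_iff.mp hp
  have hq' := hasFPowerSeriesAt_iff.mp hq
  rw [hasFPowerSeriesAt_iff]
  filter_upwards [hp', hq', mySummable hp, mySummable hq] with y h1 h2 s1 s2
  set F : ℕ → ℂ := fun n => y ^ n • p.coeff n with hF
  set G : ℕ → ℂ := fun n => y ^ n • q.coeff n with hG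
  have hsum : Summable (fun n => ∑ k ∈ Finset.range (n + 1), F k * G (n - k)) :=
    summable_sum_mul_range_of_summable_norm' (f := F) (g := G) s1 h1.summable s2 h2.summable
  have htsum := tsum_mul_tsum_eq_tsum_sum_range_of_summable_norm (f := F) (g := G) s1 s2
  have key : HasSum (fun n => ∑ k ∈ Finset.range (n + 1), F k * G (n - k))
      (f (0 + y) * g (0 + y)) := by
    apply hsum.hasSum_iff.mpr
    rw [← htsum, h1.tsum_eq, h2.tsum_eq]
  convert key using 2 with n
  · rfl
  rw [myOfScalars_coeff, smul_eq_mul, Finset.mul_sum]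
  apply Finset.sum_congr rfl
  intro k hk
  have hkn : k ≤ n := Nat.lt_succ_iff.mp (Finset.mem_range.mp hk)
  simp only [hF, hG, smul_eq_mul]
  rw [show y ^ k * p.coeff k * (y ^ (n - k) * q.coeff (n - k))
      = (y ^ k * y ^ (n - k)) * (p.coeff k * q.coeff (n - k)) by ring, ← pow_add,
    Nat.add_sub_cancel' hkn]

theorem stmt2 (z a : ℂ) (hz : ∀ x : ℝ, x ≤ 0 → z ≠ (x : ℂ)) (hz1 : z ≠ 1) :
    taylorCoeff (lerchF z a) 0 = (1 - z ^ ((1 : ℂ) - a)) / (1 - z) ∧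
    ∀ n : ℕ, 1 ≤ n →
      taylorCoeff (lerchF z a) n
        = z / (1 - z) *
            (∑ k ∈ Finset.range n,
                ((-1 : ℂ) ^ (n - k) / ((n - k).factorial : ℂ)) * taylorCoeff (lerchF z a) k
              - (a - 1) ^ n / ((n.factorial : ℂ) * z ^ a)) := by
  have hz0 : z ≠ 0 := by
    intro h
    exact hz 0 le_rfl (by simp [h])
  have hz1' : (1 : ℂ) - z ≠ 0 := sub_ne_zero.mpr (Ne.symm hz1)
  have hza : z ^ a ≠ 0 := by
    rw [Complex.cpow_def_of_ne_zero hz0]; exact Complex.exp_ne_zero _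
  set w : ℂ := z ^ ((1 : ℂ) - a) with hw
  have harg_lt : (Complex.log z).im < Real.pi := by
    rw [Complex.log_im]
    rcases lt_or_eq_of_le (Complex.arg_le_pi z) with h | h
    · exact h
    · exfalso
      rcases Complex.arg_eq_pi_iff.mp h with ⟨hre, him⟩
      exact hz z.re hre.le (Complex.ext (by simp) (by simp [him]))
  have harg_gt : -Real.pi < (Complex.log z).im := by
    rw [Complex.log_im]; exact Complex.neg_pi_lt_arg z
  have hlog_ev : ∀ᶠ x in nhds (0 : ℂ),
      Complex.log (z * Complex.exp (-x)) = Complex.log z - x := by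
    have hcont : ContinuousAt (fun x : ℂ => (Complex.log z - x).im) 0 :=
      (Complex.continuous_im.comp (continuous_const.sub continuous_id)).continuousAt
    have hmem : (fun x : ℂ => (Complex.log z - x).im) 0 ∈ Set.Ioo (-Real.pi) Real.pi := by
      simpa using ⟨harg_gt, harg_lt⟩
    have hev := hcont.eventually_mem (isOpen_Ioo.mem_nhds hmem)
    filter_upwards [hev] with x hx
    have hxe : z * Complex.exp (-x) = Complex.exp (Complex.log z - x) := by
      rw [sub_eq_add_neg, Complex.exp_add, Complex.exp_log hz0]
    rw [hxe, Complex.log_exp hx.1 hx.2.le]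
  have hne_ev : ∀ᶠ x in nhds (0 : ℂ), z * Complex.exp (-x) ≠ 1 := by
    have hcont : ContinuousAt (fun x : ℂ => z * Complex.exp (-x)) 0 := by fun_prop
    have h0 : (fun x : ℂ => z * Complex.exp (-x)) 0 ≠ 1 := by simpa using hz1
    exact hcont.eventually_ne h0
  have hpow_ev : ∀ᶠ x in nhds (0 : ℂ),
      (z * Complex.exp (-x)) ^ ((1 : ℂ) - a) = w * Complex.exp ((a - 1) * x) := by
    filter_upwards [hlog_ev] with x hx
    have hne0 : z * Complex.exp (-x) ≠ 0 := mul_ne_zero hz0 (Complex.exp_ne_zero _)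
    rw [Complex.cpow_def_of_ne_zero hne0, hx, hw, Complex.cpow_def_of_ne_zero hz0,
      ← Complex.exp_add]
    congr 1
    ring
  set num : ℂ → ℂ := fun x => 1 + -w * Complex.exp ((a - 1) * x) with hnum
  set den : ℂ → ℂ := fun x => 1 + -z * Complex.exp (-1 * x) with hden
  have hden_eq : ∀ x : ℂ, den x = 1 - z * Complex.exp (-x) := by
    intro x
    simp only [hden, neg_one_mul]
    ring
  have heqf : lerchF z a =ᶠ[nhds 0] fun x => num x / den x := by
    filter_upwards [hne_ev, hpow_ev] with x h1 h2
    rw [lerchF, if_neg h1, h2, hden_eq, hnum]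
    congr 1
    ring
  have hD := myExpAff 1 (-z) (-1)
  have hR := myExpAff 1 (-w) (a - 1)
  have hden0 : den 0 ≠ 0 := by
    rw [hden_eq]
    simpa using hz1'
  have hgA : AnalyticAt ℂ (fun x => num x / den x) 0 :=
    hR.analyticAt.div hD.analyticAt hden0
  obtain ⟨P, hP⟩ := hgA
  have hlf : HasFPowerSeriesAt (lerchF z a) P 0 := hP.congr heqf.symm
  have htc : ∀ n, taylorCoeff (lerchF z a) n = P.coeff n := fun n => myTaylorCoeff hlf n
  have hprod := myMul hD hlf
  have hprod_ev : (fun x => den x * lerchF z a x) =ᶠ[nhds 0] num := by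
    filter_upwards [heqf, hne_ev] with x h1 h2
    have hdne : den x ≠ 0 := by
      rw [hden_eq]
      exact sub_ne_zero.mpr (Ne.symm h2)
    show den x * lerchF z a x = num x
    rw [h1, mul_comm, div_mul_cancel₀ _ hdne]
  have hnum2 : HasFPowerSeriesAt num _ 0 := hprod.congr hprod_ev
  have hseq := hnum2.eq_formalMultilinearSeries hR
  have hco : ∀ n : ℕ, (∑ k ∈ Finset.range (n + 1),
      (FormalMultilinearSeries.ofScalars ℂ
        (fun m => if m = 0 then (1 : ℂ) + -z else -z * (-1) ^ m / (m.factorial : ℂ))).coeff k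
        * P.coeff (n - k))
      = (if n = 0 then (1 : ℂ) + -w else -w * (a - 1) ^ n / (n.factorial : ℂ)) := by
    intro n
    have h := congrArg (fun s : FormalMultilinearSeries ℂ ℂ ℂ => s.coeff n) hseq
    simpa [myOfScalars_coeff] using h
  constructor
  · rw [htc 0]
    have h00 := hco 0
    simp [myOfScalars_coeff] at h00
    rw [eq_div_iff hz1']
    linear_combination h00
  · intro n hn
    have hn0 : n ≠ 0 := by omega
    have hE := hco n
    rw [Finset.sum_range_succ'] at hE
    simp only [myOfScalars_coeff, Nat.succ_ne_zero, if_false, if_neg hn0, Nat.sub_zero, eq_self_iff_true, if_true,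
      Nat.add_eq_zero, one_ne_zero, and_false] at hE
    have hrefl : ∑ i ∈ Finset.range n,
        (-z * (-1) ^ (i + 1) / (((i + 1).factorial : ℂ))) * P.coeff (n - (i + 1))
        = ∑ k ∈ Finset.range n,
          (-z) * (((-1 : ℂ)) ^ (n - k) / ((n - k).factorial : ℂ) * P.coeff k) := by
      rw [← Finset.sum_range_reflect]
      apply Finset.sum_congr rfl
      intro k hk
      have hkn : k < n := Finset.mem_range.mp hk
      have e1 : n - 1 - k + 1 = n - k := by omega
      have e2 : n - (n - 1 - k + 1) = k := by omega
      rw [e2, e1]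
      ring
    rw [hrefl, ← Finset.mul_sum] at hE
    simp only [htc]
    set S : ℂ := ∑ k ∈ Finset.range n,
      ((-1 : ℂ)) ^ (n - k) / ((n - k).factorial : ℂ) * P.coeff k with hS
    have hwz : w * z ^ a = z := by
      rw [hw, ← Complex.cpow_add _ _ hz0]
      norm_num
    have hw' : w = z / z ^ a := by
      rw [eq_div_iff hza]
      exact hwz
    have key : P.coeff n = (z * S - w * (a - 1) ^ n / (n.factorial : ℂ)) / (1 - z) := by
      rw [eq_div_iff hz1']
      linear_combination hE
    rw [key, hw']
    have hfac : ((n.factorial : ℂ)) ≠ 0 := by exact_mod_cast n.factorial_ne_zero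
    field_simp
end

section
/- Let a ∈ ℂ. The Maclaurin coefficients C_n(1,a) of x ↦ (1 − e^{(a−1)x})/(1 − e^{−x}) satisfy C_0(1,a) = 1 − a and, for every n ≥ 1, the recurrence C_n(1,a) = −(a−1)^{n+1}/(n+1)! − Σ_{k=0}^{n−1} ((−1)^{n−k}/(n+1−k)!) C_k(1,a). -/
open scoped BigOperators
open FormalMultilinearSeries Finset

/-- `x ↦ (1 - e^{(a-1)x})/(1 - e^{-x})`, with the removable singularity at `x = 0`
filled by its limiting value `1 - a`. -/
noncomputable def lerchF1 (a x : ℂ) : ℂ :=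
  if x = 0 then 1 - a else (1 - Complex.exp ((a - 1) * x)) / (1 - Complex.exp (-x))

noncomputable def Nfun (w x : ℂ) : ℂ := if x = 0 then -w else (1 - Complex.exp (w * x)) / x

noncomputable def ncoef (w : ℂ) (n : ℕ) : ℂ := -w ^ (n + 1) / ((n + 1).factorial : ℂ)

lemma hasSum_exp' (w : ℂ) : HasSum (fun n => w ^ n / (n.factorial : ℂ)) (Complex.exp w) := by
  rw [Complex.exp_eq_exp_ℂ]
  exact NormedSpace.expSeries_div_hasSum_exp w

lemma hasSum_Nfun (w x : ℂ) : HasSum (fun n => x ^ n • ncoef w n) (Nfun w x) := by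
  have he := hasSum_exp' (w * x)
  have h2 : HasSum (fun n => (w * x) ^ (n + 1) / ((n + 1).factorial : ℂ))
      (Complex.exp (w * x) - 1) := by
    simpa using (hasSum_nat_add_iff' (f := fun n => (w * x) ^ n / (n.factorial : ℂ)) 1).2 he
  have h3 : HasSum (fun n => -((w * x) ^ (n + 1) / ((n + 1).factorial : ℂ)))
      (1 - Complex.exp (w * x)) := by
    simpa [neg_sub] using h2.neg
  by_cases hx : x = 0
  · subst hx
    have : HasSum (fun n => (0 : ℂ) ^ n • ncoef w n) ((0:ℂ) ^ 0 • ncoef w 0) :=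
      hasSum_single 0 (by intro b hb; simp [zero_pow hb])
    simpa [Nfun, ncoef] using this
  · have h4 := h3.div_const x
    rw [Nfun, if_neg hx]
    have hfun : (fun n => x ^ n • ncoef w n)
        = fun n => -((w * x) ^ (n + 1) / ((n + 1).factorial : ℂ)) / x := by
      funext n
      rw [eq_div_iff hx, smul_eq_mul, ncoef, mul_pow, pow_succ]
      ring
    rw [hfun]
    exact h4

lemma ofScalars_coeff (c : ℕ → ℂ) (n : ℕ) : (ofScalars ℂ c).coeff n = c n := by
  show (ofScalars ℂ c n) (fun _ => (1 : ℂ)) = c n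
  rw [ofScalars_apply_eq]
  simp

lemma hasFPowerSeriesAt_Nfun (w : ℂ) : HasFPowerSeriesAt (Nfun w) (ofScalars ℂ (ncoef w)) 0 := by
  rw [hasFPowerSeriesAt_iff]
  filter_upwards with z
  simpa [ofScalars_coeff, zero_add] using hasSum_Nfun w z

lemma lerch_eq (a : ℂ) : lerchF1 a = fun x => Nfun (a - 1) x / Nfun (-1) x := by
  funext x
  by_cases hx : x = 0
  · subst hx
    simp [lerchF1, Nfun]
  · rw [lerchF1, if_neg hx, Nfun, Nfun, if_neg hx, if_neg hx, neg_one_mul]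
    by_cases hB : 1 - Complex.exp (-x) = 0
    · simp [hB]
    · field_simp

lemma analyticAt_lerch (a : ℂ) : AnalyticAt ℂ (lerchF1 a) 0 := by
  rw [lerch_eq]
  refine AnalyticAt.div (hasFPowerSeriesAt_Nfun (a - 1)).analyticAt
    (hasFPowerSeriesAt_Nfun (-1)).analyticAt ?_
  simp [Nfun]

noncomputable def dcoefGen (w : ℂ) (n : ℕ) : ℂ :=
  if n = 0 then 0 else -w ^ n / (n.factorial : ℂ)

lemma hasSum_one_sub_exp (w z : ℂ) :
    HasSum (fun n => dcoefGen w n * z ^ n) (1 - Complex.exp (w * z)) := by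
  have h2 := (hasSum_exp' (w * z)).neg.add (hasSum_ite_eq (0 : ℕ) (1 : ℂ))
  have hfe : (fun n => dcoefGen w n * z ^ n)
      = fun n => -((w * z) ^ n / (n.factorial : ℂ)) + if n = 0 then 1 else 0 := by
    funext n
    rcases n with _ | n
    · simp [dcoefGen]
    · simp only [dcoefGen, if_neg (Nat.succ_ne_zero n), mul_pow, if_neg (Nat.succ_ne_zero n),
        add_zero]
      ring
  rw [hfe]
  simpa [neg_add_eq_sub] using h2

open Real in
lemma func_eq (a z : ℂ) (hz : ‖z‖ < 1) :
    lerchF1 a z * (1 - Complex.exp (-z)) = 1 - Complex.exp ((a - 1) * z) := by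
  by_cases h0 : z = 0
  · simp [h0]
  · have hne : 1 - Complex.exp (-z) ≠ 0 := by
      intro h
      have h1 : Complex.exp (-z) = 1 := (sub_eq_zero.mp h).symm
      rw [Complex.exp_eq_one_iff] at h1
      obtain ⟨n, hn⟩ := h1
      have hzn : z = -(n * (2 * (π : ℂ) * Complex.I)) := by
        rw [← hn]; ring
      have hn0 : n ≠ 0 := by
        rintro rfl
        simp at hzn
        exact h0 hzn
      have hnorm : ‖z‖ = |(n : ℝ)| * (2 * π) := by
        rw [hzn]
        simp [norm_mul, Complex.norm_I, abs_of_pos Real.pi_pos, Real.pi_pos.le]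
      have h1le : (1 : ℝ) ≤ |(n : ℝ)| := by
        rw [← Int.cast_abs]
        exact_mod_cast Int.one_le_abs hn0
      have : (2 : ℝ) * π ≤ ‖z‖ := by
        rw [hnorm]
        nlinarith [Real.pi_pos]
      nlinarith [Real.pi_gt_three]
    rw [lerchF1, if_neg h0, div_mul_cancel₀ _ hne]

lemma coeff_rec (a : ℂ) {p : FormalMultilinearSeries ℂ ℂ ℂ}
    (hp : HasFPowerSeriesAt (lerchF1 a) p 0) :
    (fun n => ∑ k ∈ Finset.range (n + 1), p.coeff k * dcoefGen (-1) (n - k))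
      = dcoefGen (a - 1) := by
  set e : ℕ → ℂ := fun n => ∑ k ∈ Finset.range (n + 1), p.coeff k * dcoefGen (-1) (n - k)
    with he
  have hmain : HasFPowerSeriesAt (fun z => 1 - Complex.exp ((a - 1) * z)) (ofScalars ℂ e) 0 := by
    rw [hasFPowerSeriesAt_iff]
    have hh := hasFPowerSeriesAt_iff.1 hp
    filter_upwards [hh, Metric.ball_mem_nhds (0 : ℂ) one_pos] with z hz1 hz2
    rw [zero_add] at hz1
    have hzn : ‖z‖ < 1 := by simpa [Metric.mem_ball, dist_zero_right] using hz2
    have S1 : HasSum (fun k => p.coeff k * z ^ k) (lerchF1 a z) := by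
      simpa [smul_eq_mul, mul_comm] using hz1
    have S2 : HasSum (fun m => dcoefGen (-1) m * z ^ m) (1 - Complex.exp (-z)) := by
      simpa [neg_one_mul] using hasSum_one_sub_exp (-1) z
    have hf : Summable fun k => ‖p.coeff k * z ^ k‖ := summable_norm_iff.2 S1.summable
    have hg : Summable fun m => ‖dcoefGen (-1) m * z ^ m‖ := summable_norm_iff.2 S2.summable
    have hsum : Summable fun n => ∑ k ∈ Finset.range (n + 1),
        (p.coeff k * z ^ k) * (dcoefGen (-1) (n - k) * z ^ (n - k)) :=
      (summable_norm_sum_mul_range_of_summable_norm hf hg).of_norm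
    have hts := tsum_mul_tsum_eq_tsum_sum_range_of_summable_norm hf hg
    rw [S1.tsum_eq, S2.tsum_eq] at hts
    have hhs : HasSum (fun n => ∑ k ∈ Finset.range (n + 1),
        (p.coeff k * z ^ k) * (dcoefGen (-1) (n - k) * z ^ (n - k)))
        (lerchF1 a z * (1 - Complex.exp (-z))) := by
      have h' := hsum.hasSum
      rwa [← hts] at h'
    rw [func_eq a z hzn] at hhs
    rw [zero_add]
    have hfe : (fun n => z ^ n • (ofScalars ℂ e).coeff n)
        = fun n => ∑ k ∈ Finset.range (n + 1),
            (p.coeff k * z ^ k) * (dcoefGen (-1) (n - k) * z ^ (n - k)) := by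
      funext n
      rw [ofScalars_coeff, smul_eq_mul, mul_comm, he]
      rw [Finset.sum_mul]
      refine Finset.sum_congr rfl fun k hk => ?_
      have hk' : k ≤ n := Nat.lt_succ_iff.mp (Finset.mem_range.mp hk)
      have hz : z ^ k * z ^ (n - k) = z ^ n := by
        rw [← pow_add, Nat.add_sub_cancel' hk']
      rw [← hz]; ring
    rw [hfe]
    exact hhs
  have h2 : HasFPowerSeriesAt (fun z => 1 - Complex.exp ((a - 1) * z))
      (ofScalars ℂ (dcoefGen (a - 1))) 0 := by
    rw [hasFPowerSeriesAt_iff]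
    filter_upwards with z
    simpa [ofScalars_coeff, smul_eq_mul, mul_comm, zero_add] using hasSum_one_sub_exp (a - 1) z
  have heq := hmain.eq_formalMultilinearSeries h2
  rwa [ofScalars_series_eq_iff] at heq

lemma taylor_eq (a : ℂ) {p : FormalMultilinearSeries ℂ ℂ ℂ}
    (hp : HasFPowerSeriesAt (lerchF1 a) p 0) (n : ℕ) :
    iteratedDeriv n (lerchF1 a) 0 / (n.factorial : ℂ) = p.coeff n := by
  obtain ⟨r, hb⟩ := hp
  have h := hb.factorial_smul (1 : ℂ) n
  rw [iteratedDeriv_eq_iteratedFDeriv, ← h]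
  have hc : p n (fun _ => (1 : ℂ)) = p.coeff n := rfl
  rw [hc, nsmul_eq_mul, mul_div_cancel_left₀]
  exact_mod_cast n.factorial_ne_zero

theorem main (a : ℂ) :
    (iteratedDeriv 0 (lerchF1 a) 0 / ((0).factorial : ℂ)) = 1 - a ∧
    ∀ n : ℕ, 1 ≤ n →
      iteratedDeriv n (lerchF1 a) 0 / (n.factorial : ℂ)
        = -((a - 1) ^ (n + 1)) / ((n + 1).factorial : ℂ)
          - ∑ k ∈ Finset.range n,
              ((-1 : ℂ) ^ (n - k) / ((n + 1 - k).factorial : ℂ))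
                * (iteratedDeriv k (lerchF1 a) 0 / (k.factorial : ℂ)) := by
  obtain ⟨p, hp⟩ := analyticAt_lerch a
  have htc : ∀ n, iteratedDeriv n (lerchF1 a) 0 / (n.factorial : ℂ) = p.coeff n :=
    fun n => taylor_eq a hp n
  refine ⟨by simp [lerchF1], ?_⟩
  intro n hn
  have h1 := congrFun (coeff_rec a hp) (n + 1)
  rw [Finset.sum_range_succ, Finset.sum_range_succ] at h1
  have d0 : dcoefGen (-1) (n + 1 - (n + 1)) = 0 := by simp [dcoefGen]
  have d1 : dcoefGen (-1) (n + 1 - n) = 1 := by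
    have h' : n + 1 - n = 1 := by omega
    simp [h', dcoefGen]
  rw [d0, d1, mul_zero, add_zero, mul_one] at h1
  have hda : dcoefGen (a - 1) (n + 1) = -((a - 1) ^ (n + 1)) / ((n + 1).factorial : ℂ) := by
    simp [dcoefGen]
  rw [hda] at h1
  rw [htc n]
  have h2 : p.coeff n = -((a - 1) ^ (n + 1)) / ((n + 1).factorial : ℂ)
      - ∑ k ∈ Finset.range n, p.coeff k * dcoefGen (-1) (n + 1 - k) := by
    linear_combination h1
  rw [h2]
  congr 1
  refine Finset.sum_congr rfl fun k hk => ?_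
  have hk' : k < n := Finset.mem_range.mp hk
  have hs : n + 1 - k = (n - k) + 1 := by omega
  rw [htc k, hs]
  simp only [dcoefGen, if_neg (Nat.succ_ne_zero (n - k))]
  rw [pow_succ]
  ring

theorem stmt3 (a : ℂ) :
    taylorCoeff (lerchF1 a) 0 = 1 - a ∧
    ∀ n : ℕ, 1 ≤ n →
      taylorCoeff (lerchF1 a) n
        = -((a - 1) ^ (n + 1)) / ((n + 1).factorial : ℂ)
          - ∑ k ∈ Finset.range n,
              ((-1 : ℂ) ^ (n - k) / ((n + 1 - k).factorial : ℂ)) * taylorCoeff (lerchF1 a) k := by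
  simpa [taylorCoeff] using main a
end

section
/- Let z ∈ ℂ with 0 < |z| < 1 and z ∉ (−1,0], let a ∈ ℂ with Re a > 0 and s ∈ ℂ with Re s > 0. Then Σ_{n=0}^∞ z^n/(a+n)^s − z^{−a} Σ_{n=1}^∞ z^n/n^s = (1/Γ(s)) ∫_0^∞ x^{s−1} e^{−a x} f(z,x,a) dx, where both series converge absolutely, all complex powers are principal, Γ is the Gamma function, and the integral converges absolutely. -/
open scoped BigOperators

open Set MeasureTheory Complex Filter

lemma realInt {c : ℝ} (hc : 0 < c) {r : ℝ} (hr : 0 < r) :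
    IntegrableOn (fun x : ℝ => x ^ (c - 1) * Real.exp (-(r * x))) (Ioi 0) := by
  have h0 := Real.GammaIntegral_convergent hc
  rw [← mul_zero r, ← integrableOn_Ioi_comp_mul_left_iff _ _ hr] at h0
  refine IntegrableOn.congr_fun (h0.const_mul (r ^ (1 - c))) (fun x hx => ?_) measurableSet_Ioi
  have hx' : (0:ℝ) < x := hx
  rw [Real.mul_rpow hr.le hx'.le, show r ^ (1 - c) * (Real.exp (-(r * x)) *
      (r ^ (c - 1) * x ^ (c - 1))) = r ^ (1 - c) * r ^ (c - 1) *
      (x ^ (c - 1) * Real.exp (-(r * x))) by ring, ← Real.rpow_add hr]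
  norm_num

-- complex integrability
lemma cpxInt {s w : ℂ} (hs : 0 < s.re) (hw : 0 < w.re) :
    IntegrableOn (fun x : ℝ => (x : ℂ) ^ (s - 1) * Complex.exp (-(w * x))) (Ioi 0) := by
  have hmeas : AEStronglyMeasurable (fun x : ℝ => (x : ℂ) ^ (s - 1) * Complex.exp (-(w * x)))
      (volume.restrict (Ioi 0)) := by
    refine ContinuousOn.aestronglyMeasurable ?_ measurableSet_Ioi
    refine ContinuousOn.mul ?_ (Continuous.continuousOn (by fun_prop))
    apply continuousOn_of_forall_continuousAt
    intro x hx
    exact (continuousAt_cpow_const <| ofReal_mem_slitPlane.2 hx).comp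
      continuous_ofReal.continuousAt
  refine (realInt hs hw).mono' hmeas ?_
  refine (ae_restrict_iff' measurableSet_Ioi).mpr (Eventually.of_forall fun x hx => ?_)
  have hx' : (0:ℝ) < x := hx
  rw [norm_mul, Complex.norm_exp,
    norm_cpow_eq_rpow_re_of_pos hx']
  simp only [sub_re, one_re, neg_re, mul_re, ofReal_re, ofReal_im, mul_zero, sub_zero]
  exact le_of_eq (by ring_nf)

lemma cpxMeas0 (s w : ℂ) : AEStronglyMeasurable
    (fun x : ℝ => (x : ℂ) ^ (s - 1) * Complex.exp (-(w * x)))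
    (volume.restrict (Ioi 0)) := by
  refine ContinuousOn.aestronglyMeasurable ?_ measurableSet_Ioi
  refine ContinuousOn.mul ?_ (Continuous.continuousOn (by fun_prop))
  apply continuousOn_of_forall_continuousAt
  intro x hx
  exact (continuousAt_cpow_const <| ofReal_mem_slitPlane.2 hx).comp
    continuous_ofReal.continuousAt

lemma cpxMeas (s w : ℂ) : AEStronglyMeasurable
    (fun x : ℝ => (x : ℂ) ^ (s - 1) * (Complex.exp (-(w * x)) * (-x : ℂ)))
    (volume.restrict (Ioi 0)) := by
  refine ContinuousOn.aestronglyMeasurable ?_ measurableSet_Ioi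
  refine ContinuousOn.mul ?_ (Continuous.continuousOn (by fun_prop))
  apply continuousOn_of_forall_continuousAt
  intro x hx
  exact (continuousAt_cpow_const <| ofReal_mem_slitPlane.2 hx).comp
    continuous_ofReal.continuousAt

lemma lemA {s : ℂ} (hs : 0 < s.re) {w : ℂ} (hw : 0 < w.re) :
    ∫ x in Ioi (0:ℝ), (x : ℂ) ^ (s - 1) * Complex.exp (-(w * x))
      = Complex.Gamma s * w ^ (-s) := by
  set U : Set ℂ := {w : ℂ | 0 < w.re} with hU
  have hUopen : IsOpen U := isOpen_lt continuous_const Complex.continuous_re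
  have hUconn : IsPreconnected U := (convex_halfSpace_re_gt 0).isPreconnected
  set F : ℂ → ℂ := fun w => ∫ x in Ioi (0:ℝ), (x : ℂ) ^ (s - 1) * Complex.exp (-(w * x)) with hF
  set G : ℂ → ℂ := fun w => Complex.Gamma s * w ^ (-s) with hG
  have hFdiff : ∀ w ∈ U, DifferentiableAt ℂ F w := by
    intro w₀ hw₀
    have hw₀' : 0 < w₀.re := hw₀
    set ε : ℝ := w₀.re / 2 with hε
    have hεpos : 0 < ε := by positivity
    have key := hasDerivAt_integral_of_dominated_loc_of_deriv_le (μ := volume.restrict (Ioi 0))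
      (F := fun w (x : ℝ) => (x : ℂ) ^ (s - 1) * Complex.exp (-(w * x)))
      (F' := fun w (x : ℝ) => (x : ℂ) ^ (s - 1) * (Complex.exp (-(w * x)) * (-x : ℂ)))
      (x₀ := w₀) (bound := fun x : ℝ => x ^ ((s.re + 1) - 1) * Real.exp (-(ε * x)))
      (Metric.ball_mem_nhds w₀ hεpos) ?_ ?_ ?_ ?_ ?_ ?_
    · exact key.2.differentiableAt
    · exact Eventually.of_forall fun w => cpxMeas0 s w
    · exact cpxInt hs hw₀'
    · exact cpxMeas s w₀
    · refine (ae_restrict_iff' measurableSet_Ioi).mpr (Eventually.of_forall fun x hx => ?_)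
      intro w hwball
      have hx' : (0:ℝ) < x := hx
      have hre : ε ≤ w.re := by
        have h1 : |w.re - w₀.re| ≤ dist w w₀ := by
          rw [Complex.dist_eq]
          simpa using Complex.abs_re_le_norm (w - w₀)
        have h2 : dist w w₀ < ε := Metric.mem_ball.mp hwball
        have := (abs_le.mp h1).1
        simp only [hε] at *
        linarith
      rw [norm_mul, norm_mul,
        Complex.norm_exp, norm_cpow_eq_rpow_re_of_pos hx']
      have h3 : ‖(-x : ℂ)‖ = x := by
        rw [← Complex.ofReal_neg, Complex.norm_real, Real.norm_eq_abs, abs_neg, abs_of_pos hx']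
      rw [h3]
      have h4 : (-(w * x)).re = -(w.re * x) := by simp [Complex.mul_re]
      rw [h4]
      have h5 : Real.exp (-(w.re * x)) ≤ Real.exp (-(ε * x)) := by
        apply Real.exp_le_exp.mpr
        nlinarith
      calc x ^ (s - 1).re * (Real.exp (-(w.re * x)) * x)
          ≤ x ^ (s - 1).re * (Real.exp (-(ε * x)) * x) := by
            apply mul_le_mul_of_nonneg_left _ (Real.rpow_nonneg hx'.le _)
            exact mul_le_mul_of_nonneg_right h5 hx'.le
        _ = x ^ (s.re + 1 - 1) * Real.exp (-(ε * x)) := by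
            rw [show s.re + 1 - 1 = (s - 1).re + 1 by simp, Real.rpow_add hx',
              Real.rpow_one]; ring
    · exact realInt (by linarith : (0:ℝ) < s.re + 1) hεpos
    · refine (ae_restrict_iff' measurableSet_Ioi).mpr (Eventually.of_forall fun x hx => ?_)
      intro w _
      have : HasDerivAt (fun w : ℂ => -(w * x)) (-x : ℂ) w := by
        exact ((hasDerivAt_id' w).mul_const (x:ℂ)).neg.congr_deriv (by simp)
      exact (this.cexp.const_mul ((x:ℂ) ^ (s - 1)))
  have hGdiff : ∀ w ∈ U, DifferentiableAt ℂ G w := by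
    intro w hw
    exact ((differentiableAt_id.cpow (differentiableAt_const _) (Or.inl hw))).const_mul _
  have hFan : AnalyticOnNhd ℂ F U :=
    (DifferentiableOn.analyticOnNhd (fun w hw => (hFdiff w hw).differentiableWithinAt) hUopen)
  have hGan : AnalyticOnNhd ℂ G U :=
    (DifferentiableOn.analyticOnNhd (fun w hw => (hGdiff w hw).differentiableWithinAt) hUopen)
  have hreal : ∀ r : ℝ, 0 < r → F r = G r := by
    intro r hr
    have := integral_cpow_mul_exp_neg_mul_Ioi hs hr
    rw [hF, hG]
    simp only
    rw [show (fun x : ℝ => (x:ℂ) ^ (s-1) * Complex.exp (-((r:ℂ) * x)))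
      = (fun x : ℝ => (x:ℂ) ^ (s-1) * Complex.exp (-(r * x))) by norm_num] at *
    rw [this, ← Complex.ofReal_one, ← Complex.ofReal_div, mul_comm]
    congr 1
    rw [Complex.ofReal_div, Complex.ofReal_one, one_div, Complex.inv_cpow, ← Complex.cpow_neg]
    rw [Complex.arg_ofReal_of_nonneg hr.le]
    exact Real.pi_ne_zero.symm
  have hfreq : ∃ᶠ z in nhdsWithin (1:ℂ) {(1:ℂ)}ᶜ, F z = G z := by
    have htend : Tendsto (fun n : ℕ => ((1 + ((n:ℝ)+1)⁻¹ : ℝ) : ℂ)) atTop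
        (nhdsWithin (1:ℂ) {(1:ℂ)}ᶜ) := by
      refine tendsto_nhdsWithin_of_tendsto_nhds_of_eventually_within _ ?_ ?_
      · have : Tendsto (fun n : ℕ => (1 + ((n:ℝ)+1)⁻¹ : ℝ)) atTop (nhds 1) := by
          have := tendsto_one_div_add_atTop_nhds_zero_nat (𝕜 := ℝ)
          simp only [one_div] at this
          simpa using tendsto_const_nhds.add this
        have h2 := (Complex.continuous_ofReal.tendsto 1).comp this
        rw [show Complex.ofReal ∘ (fun n : ℕ => (1 + ((n:ℝ)+1)⁻¹ : ℝ))
          = (fun n : ℕ => ((1 + ((n:ℝ)+1)⁻¹ : ℝ) : ℂ)) from rfl] at h2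
        simpa using h2
      · refine Eventually.of_forall fun n => ?_
        simp only [Set.mem_compl_iff, Set.mem_singleton_iff]
        intro h
        rw [← Complex.ofReal_one, Complex.ofReal_inj] at h
        have h' : ((n:ℝ)+1)⁻¹ = 0 := by linarith
        have : (0:ℝ) < ((n:ℝ)+1)⁻¹ := by positivity
        linarith
    refine htend.frequently (Frequently.of_forall fun n => ?_)
    exact hreal _ (by positivity)
  have h1U : (1:ℂ) ∈ U := by simp [hU]
  have := hFan.eqOn_of_preconnected_of_frequently_eq hGan hUconn h1U hfreq
  exact this hw

lemma pow_split {z : ℂ} (hz : z ≠ 0) (a : ℂ) (x : ℝ) :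
    (z * Complex.exp (-(x:ℂ))) ^ ((1:ℂ) - a)
      = z ^ ((1:ℂ) - a) * Complex.exp ((a - 1) * x) := by
  have h1 : z * Complex.exp (-(x:ℂ)) = Complex.exp (Complex.log z - x) := by
    rw [Complex.exp_sub, Complex.exp_log hz, Complex.exp_neg]
    simp [div_eq_mul_inv, Complex.exp_ofReal_re]
  rw [h1, Complex.cpow_def_of_ne_zero (Complex.exp_ne_zero _),
    Complex.log_exp (by simpa [Complex.log_im] using Complex.neg_pi_lt_arg z)
      (by simpa [Complex.log_im] using Complex.arg_le_pi z),
    Complex.cpow_def_of_ne_zero hz, ← Complex.exp_add]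
  congr 1
  ring

-- closed-form of the integrand on `Ioi 0`
lemma integrand_eq {z a s : ℂ} (hz : z ≠ 0) (hz1 : ‖z‖ < 1) {x : ℝ} (hx : 0 < x) :
    (x : ℂ) ^ (s - 1) * Complex.exp (-a * (x : ℂ)) * lerchF z a (x : ℂ)
      = (x : ℂ) ^ (s - 1) * ((Complex.exp (-(a * x)) - z ^ ((1:ℂ) - a) * Complex.exp (-(x:ℂ)))
          * (1 - z * Complex.exp (-(x:ℂ)))⁻¹) := by
  have habs : ‖z * Complex.exp (-(x:ℂ))‖ < 1 := by
    rw [norm_mul, Complex.norm_exp]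
    calc ‖z‖ * Real.exp ((-(x:ℂ)).re) ≤ ‖z‖ * 1 := by
          apply mul_le_mul_of_nonneg_left _ (norm_nonneg z)
          rw [Real.exp_le_one_iff]
          simp [hx.le]
      _ < 1 := by simpa using hz1
  have hne : z * Complex.exp (-(x:ℂ)) ≠ 1 := by
    intro h; rw [h] at habs; simp at habs
  rw [lerchF, if_neg hne, pow_split hz a x, div_eq_mul_inv]
  have key : Complex.exp (-a * (x:ℂ)) * (1 - z ^ ((1:ℂ)-a) * Complex.exp ((a-1) * x))
      = Complex.exp (-(a * (x:ℂ))) - z ^ ((1:ℂ)-a) * Complex.exp (-(x:ℂ)) := by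
    rw [mul_sub, mul_one, show -a * (x:ℂ) = -(a * (x:ℂ)) by ring]
    congr 1
    rw [show Complex.exp (-(a * (x:ℂ))) * (z ^ ((1:ℂ)-a) * Complex.exp ((a-1) * x))
      = z ^ ((1:ℂ)-a) * (Complex.exp (-(a * (x:ℂ))) * Complex.exp ((a-1) * x)) by ring,
      ← Complex.exp_add, show -(a * (x:ℂ)) + (a-1) * x = -(x:ℂ) by ring]
  rw [← key]
  ring

theorem stmt4 (z a s : ℂ) (hz0 : 0 < ‖z‖) (hz1 : ‖z‖ < 1)
    (hz2 : ∀ x : ℝ, x ≤ 0 → z ≠ (x : ℂ)) (ha : 0 < a.re) (hs : 0 < s.re) :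
    Summable (fun n : ℕ => ‖z ^ n / (a + (n : ℂ)) ^ s‖) ∧
    Summable (fun n : ℕ => ‖z ^ (n + 1) / ((n : ℂ) + 1) ^ s‖) ∧
    MeasureTheory.IntegrableOn
      (fun x : ℝ => (x : ℂ) ^ (s - 1) * Complex.exp (-a * (x : ℂ)) * lerchF z a (x : ℂ))
      (Set.Ioi 0) ∧
    (∑' n : ℕ, z ^ n / (a + (n : ℂ)) ^ s)
        - z ^ (-a) * (∑' n : ℕ, z ^ (n + 1) / ((n : ℂ) + 1) ^ s)
      = (1 / Complex.Gamma s) *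
          ∫ x in Set.Ioi (0 : ℝ),
            (x : ℂ) ^ (s - 1) * Complex.exp (-a * (x : ℂ)) * lerchF z a (x : ℂ) := by
  have hz : z ≠ 0 := by
    intro h; rw [h] at hz0; simp at hz0
  set c1 : ℝ := ‖z ^ ((1:ℂ) - a)‖ with hc1
  -- the dominating function
  set B : ℝ → ℝ := fun x => x ^ (s.re - 1) * Real.exp (-(a.re * x))
      + c1 * (x ^ (s.re - 1) * Real.exp (-(1 * x))) with hB
  have hBint : IntegrableOn B (Ioi 0) :=
    (realInt hs ha).add ((realInt hs one_pos).const_mul c1)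
  -- the summands
  set g : ℕ → ℝ → ℂ := fun n x =>
      z ^ n * ((x : ℂ) ^ (s - 1) * Complex.exp (-((a + n) * x)))
      - z ^ ((1:ℂ) - a) * z ^ n * ((x : ℂ) ^ (s - 1) * Complex.exp (-(((n:ℂ) + 1) * x)))
    with hgdef
  have hrate1 : ∀ n : ℕ, 0 < (a + (n:ℂ)).re := by
    intro n
    simp only [Complex.add_re, Complex.natCast_re]
    positivity
  have hrate2 : ∀ n : ℕ, 0 < ((n:ℂ) + 1).re := by
    intro n
    simp only [Complex.add_re, Complex.natCast_re, Complex.one_re]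
    positivity
  have hgInt : ∀ n : ℕ, IntegrableOn (g n) (Ioi 0) := fun n =>
    ((cpxInt hs (hrate1 n)).const_mul _).sub ((cpxInt hs (hrate2 n)).const_mul _)
  -- product form of `g`
  have hprod : ∀ (n : ℕ) (x : ℝ), g n x
      = ((x : ℂ) ^ (s - 1) * (Complex.exp (-(a * x)) - z ^ ((1:ℂ) - a) * Complex.exp (-(x:ℂ))))
        * (z * Complex.exp (-(x:ℂ))) ^ n := by
    intro n x
    have e1 : Complex.exp (-((a + n) * x)) = Complex.exp (-(a * x)) * Complex.exp (-(x:ℂ)) ^ n := by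
      rw [← Complex.exp_nat_mul, ← Complex.exp_add]
      congr 1
      push_cast
      ring
    have e2 : Complex.exp (-(((n:ℂ) + 1) * x)) = Complex.exp (-(x:ℂ)) * Complex.exp (-(x:ℂ)) ^ n := by
      rw [← Complex.exp_nat_mul, ← Complex.exp_add]
      congr 1
      push_cast
      ring
    rw [hgdef]
    simp only
    rw [e1, e2, mul_pow]
    ring
  -- pointwise norm bound
  have habs : ∀ {x : ℝ}, 0 < x → ‖z * Complex.exp (-(x:ℂ))‖ ≤ ‖z‖ := by
    intro x hx
    rw [norm_mul, Complex.norm_exp]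
    calc ‖z‖ * Real.exp ((-(x:ℂ)).re) ≤ ‖z‖ * 1 := by
          apply mul_le_mul_of_nonneg_left _ (norm_nonneg z)
          rw [Real.exp_le_one_iff]
          simp [hx.le]
      _ = ‖z‖ := mul_one _
  have hbound : ∀ (n : ℕ) {x : ℝ}, 0 < x → ‖g n x‖ ≤ ‖z‖ ^ n * B x := by
    intro n x hx
    rw [hprod n x, norm_mul, norm_mul, norm_pow]
    have h1 : ‖(x:ℂ) ^ (s-1)‖ = x ^ (s.re - 1) := by
      rw [norm_cpow_eq_rpow_re_of_pos hx]
      norm_num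
    have h2 : ‖Complex.exp (-(a * x)) - z ^ ((1:ℂ)-a) * Complex.exp (-(x:ℂ))‖
        ≤ Real.exp (-(a.re * x)) + c1 * Real.exp (-(1 * x)) := by
      refine (norm_sub_le _ _).trans ?_
      rw [norm_mul, Complex.norm_exp, Complex.norm_exp]
      have : (-(a * (x:ℂ))).re = -(a.re * x) := by
        simp [Complex.mul_re]
      rw [this]
      have : (-(x:ℂ)).re = -(1 * x) := by simp
      rw [this, hc1]
    have h3 : ‖z * Complex.exp (-(x:ℂ))‖ ^ n ≤ ‖z‖ ^ n :=
      pow_le_pow_left₀ (norm_nonneg _) (habs hx) n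
    calc ‖(x:ℂ) ^ (s-1)‖ * ‖_‖ * ‖z * Complex.exp (-(x:ℂ))‖ ^ n
        ≤ x ^ (s.re - 1) * (Real.exp (-(a.re * x)) + c1 * Real.exp (-(1 * x)))
          * ‖z‖ ^ n := by
          apply mul_le_mul _ h3 (pow_nonneg (norm_nonneg _) n)
          · positivity
          · apply mul_le_mul _ h2 (norm_nonneg _) (Real.rpow_nonneg hx.le _)
            exact le_of_eq h1
      _ = ‖z‖ ^ n * B x := by rw [hB]; ring
  -- summability of the integrals of norms
  have hIB : ∀ n : ℕ, ∫ x in Ioi (0:ℝ), ‖g n x‖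
      ≤ ‖z‖ ^ n * ∫ x in Ioi (0:ℝ), B x := by
    intro n
    rw [← MeasureTheory.integral_const_mul]
    exact setIntegral_mono_on ((hgInt n).norm) (hBint.const_mul _) measurableSet_Ioi
      (fun x hx => hbound n hx)
  have hsumnorm : Summable fun n : ℕ => ∫ x in Ioi (0:ℝ), ‖g n x‖ := by
    refine Summable.of_nonneg_of_le (fun n => integral_nonneg fun x => norm_nonneg _) hIB ?_
    exact (summable_geometric_of_lt_one (norm_nonneg z) hz1).mul_right _
  -- pointwise sum
  have hgx : ∀ x ∈ Ioi (0:ℝ), HasSum (fun n : ℕ => g n x)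
      ((x : ℂ) ^ (s - 1) * Complex.exp (-a * (x : ℂ)) * lerchF z a (x : ℂ)) := by
    intro x hx
    have hx' : (0:ℝ) < x := hx
    have hlt : ‖z * Complex.exp (-(x:ℂ))‖ < 1 :=
      lt_of_le_of_lt (habs hx') hz1
    have hgeom := hasSum_geometric_of_norm_lt_one hlt
    have := hgeom.mul_left
      ((x : ℂ) ^ (s - 1) * (Complex.exp (-(a * x)) - z ^ ((1:ℂ) - a) * Complex.exp (-(x:ℂ))))
    rw [integrand_eq hz hz1 hx', ← mul_assoc]
    exact HasSum.congr_fun this fun n => hprod n x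
  -- swap sum and integral
  have key := hasSum_integral_of_summable_integral_norm (μ := volume.restrict (Ioi 0))
    hgInt hsumnorm
  have hIeq : (∫ x in Ioi (0:ℝ), ∑' n : ℕ, g n x)
      = ∫ x in Ioi (0:ℝ), (x : ℂ) ^ (s - 1) * Complex.exp (-a * (x : ℂ)) * lerchF z a (x : ℂ) :=
    setIntegral_congr_fun measurableSet_Ioi fun x hx => (hgx x hx).tsum_eq
  -- values of the individual integrals
  have hIval : ∀ n : ℕ, (∫ x in Ioi (0:ℝ), g n x)
      = Complex.Gamma s * (z ^ n / (a + (n:ℂ)) ^ s)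
        - Complex.Gamma s * (z ^ (-a) * (z ^ (n + 1) / ((n:ℂ) + 1) ^ s)) := by
    intro n
    rw [hgdef]
    simp only
    rw [MeasureTheory.integral_sub ((cpxInt hs (hrate1 n)).const_mul _)
      ((cpxInt hs (hrate2 n)).const_mul _), MeasureTheory.integral_const_mul,
      MeasureTheory.integral_const_mul, lemA hs (hrate1 n), lemA hs (hrate2 n),
      Complex.cpow_neg, Complex.cpow_neg]
    have hza : z ^ ((1:ℂ) - a) = z * z ^ (-a) := by
      rw [sub_eq_add_neg, Complex.cpow_add _ _ hz, Complex.cpow_one]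
    rw [hza, pow_succ]
    field_simp
  -- first summability
  have hSum1 : Summable (fun n : ℕ => ‖z ^ n / (a + (n : ℂ)) ^ s‖) := by
    have hane : ∀ n : ℕ, (a + (n:ℂ)) ≠ 0 := by
      intro n h
      have := hrate1 n
      rw [h] at this
      simp at this
    refine Summable.of_nonneg_of_le (fun n => norm_nonneg _) (fun n => ?_)
      ((summable_geometric_of_lt_one (norm_nonneg z) hz1).mul_right
        (Real.exp (Real.pi * |s.im|) / a.re ^ s.re))
    rw [norm_div, norm_pow,
      Complex.norm_cpow_of_ne_zero (hane n)]
    rw [div_div_eq_mul_div]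
    have habspos : (0:ℝ) < ‖a + (n:ℂ)‖ := norm_pos_iff.mpr (hane n)
    rw [div_le_iff₀ (Real.rpow_pos_of_pos habspos _)]
    have hle1 : Real.exp ((a + (n:ℂ)).arg * s.im) ≤ Real.exp (Real.pi * |s.im|) := by
      apply Real.exp_le_exp.mpr
      calc (a + (n:ℂ)).arg * s.im ≤ |(a + (n:ℂ)).arg * s.im| := le_abs_self _
        _ = |(a + (n:ℂ)).arg| * |s.im| := abs_mul _ _
        _ ≤ Real.pi * |s.im| := by
            apply mul_le_mul_of_nonneg_right (Complex.abs_arg_le_pi _) (abs_nonneg _)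
    have hle2 : a.re ^ s.re ≤ ‖a + (n:ℂ)‖ ^ s.re := by
      apply Real.rpow_le_rpow ha.le _ hs.le
      calc a.re ≤ (a + (n:ℂ)).re := by
            simp only [Complex.add_re, Complex.natCast_re]
            have : (0:ℝ) ≤ (n:ℝ) := Nat.cast_nonneg n
            linarith
        _ ≤ ‖a + (n:ℂ)‖ := Complex.re_le_norm _
    calc ‖z‖ ^ n * Real.exp ((a + (n:ℂ)).arg * s.im)
        ≤ ‖z‖ ^ n * Real.exp (Real.pi * |s.im|) :=
          mul_le_mul_of_nonneg_left hle1 (by positivity)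
      _ = ‖z‖ ^ n * (Real.exp (Real.pi * |s.im|) / a.re ^ s.re) * a.re ^ s.re := by
          field_simp
      _ ≤ ‖z‖ ^ n * (Real.exp (Real.pi * |s.im|) / a.re ^ s.re)
          * ‖a + (n:ℂ)‖ ^ s.re := by
          apply mul_le_mul_of_nonneg_left hle2 (by positivity)
  -- second summability
  have hSum2 : Summable (fun n : ℕ => ‖z ^ (n + 1) / ((n : ℂ) + 1) ^ s‖) := by
    refine Summable.of_nonneg_of_le (fun n => norm_nonneg _) (fun n => ?_)
      (summable_geometric_of_lt_one (norm_nonneg z) hz1)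
    rw [norm_div, norm_pow]
    have hcast : ((n:ℂ) + 1) = (((n:ℝ) + 1 : ℝ) : ℂ) := by push_cast; ring
    have h1 : ‖((n:ℂ) + 1) ^ s‖ = ((n:ℝ) + 1) ^ s.re := by
      rw [hcast, norm_cpow_eq_rpow_re_of_pos (by positivity)]
    rw [h1]
    have h2 : (1:ℝ) ≤ ((n:ℝ) + 1) ^ s.re :=
      Real.one_le_rpow (by simp) hs.le
    calc ‖z‖ ^ (n+1) / ((n:ℝ) + 1) ^ s.re
        ≤ ‖z‖ ^ (n+1) / 1 := by
          apply div_le_div_of_nonneg_left _ _ h2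
          · positivity
          · norm_num
      _ = ‖z‖ ^ n * ‖z‖ := by rw [div_one, pow_succ]
      _ ≤ ‖z‖ ^ n * 1 :=
          mul_le_mul_of_nonneg_left hz1.le (by positivity)
      _ = ‖z‖ ^ n := mul_one _
  -- integrability of the full integrand
  have hIntgr : IntegrableOn
      (fun x : ℝ => (x : ℂ) ^ (s - 1) * Complex.exp (-a * (x : ℂ)) * lerchF z a (x : ℂ))
      (Ioi 0) := by
    set Gc : ℝ → ℂ := fun x => (x : ℂ) ^ (s - 1) *
        ((Complex.exp (-(a * x)) - z ^ ((1:ℂ) - a) * Complex.exp (-(x:ℂ)))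
          * (1 - z * Complex.exp (-(x:ℂ)))⁻¹) with hGc
    have hden : ∀ {x : ℝ}, 0 < x → (1 : ℂ) - z * Complex.exp (-(x:ℂ)) ≠ 0 := by
      intro x hx h
      have h1 : z * Complex.exp (-(x:ℂ)) = 1 := by
        have := sub_eq_zero.mp h
        exact this.symm
      have := lt_of_le_of_lt (habs hx) hz1
      rw [h1] at this
      simp at this
    have hGcInt : IntegrableOn Gc (Ioi 0) := by
      have hmeas : AEStronglyMeasurable Gc (volume.restrict (Ioi 0)) := by
        refine ContinuousOn.aestronglyMeasurable ?_ measurableSet_Ioi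
        refine ContinuousOn.mul ?_ ?_
        · apply continuousOn_of_forall_continuousAt
          intro x hx
          exact (continuousAt_cpow_const <| ofReal_mem_slitPlane.2 hx).comp
            continuous_ofReal.continuousAt
        · refine ContinuousOn.mul (Continuous.continuousOn (by fun_prop)) ?_
          refine ContinuousOn.inv₀ (Continuous.continuousOn (by fun_prop)) ?_
          exact fun x hx => hden hx
      refine ((hBint.const_mul ((1 - ‖z‖)⁻¹)).mono' hmeas ?_)
      refine (ae_restrict_iff' measurableSet_Ioi).mpr (Eventually.of_forall fun x hx => ?_)
      have hx' : (0:ℝ) < x := hx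
      have hzpos : (0:ℝ) < 1 - ‖z‖ := by linarith
      have hdle : 1 - ‖z‖ ≤ ‖1 - z * Complex.exp (-(x:ℂ))‖ := by
        calc 1 - ‖z‖ ≤ 1 - ‖z * Complex.exp (-(x:ℂ))‖ := by
              linarith [habs hx']
          _ ≤ ‖1 - z * Complex.exp (-(x:ℂ))‖ := by
              simpa using norm_sub_norm_le (1:ℂ) (z * Complex.exp (-(x:ℂ)))
      rw [hGc]
      simp only
      rw [norm_mul, norm_mul, norm_inv]
      have h1 : ‖(x:ℂ) ^ (s-1)‖ = x ^ (s.re - 1) := by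
        rw [norm_cpow_eq_rpow_re_of_pos hx']
        norm_num
      rw [h1]
      have h2 : ‖Complex.exp (-(a * x)) - z ^ ((1:ℂ)-a) * Complex.exp (-(x:ℂ))‖
          ≤ Real.exp (-(a.re * x)) + c1 * Real.exp (-(1 * x)) := by
        refine (norm_sub_le _ _).trans ?_
        rw [norm_mul, Complex.norm_exp, Complex.norm_exp]
        have e1 : (-(a * (x:ℂ))).re = -(a.re * x) := by simp [Complex.mul_re]
        have e2 : (-(x:ℂ)).re = -(1 * x) := by simp
        rw [e1, e2, hc1]
      have h3 : (‖1 - z * Complex.exp (-(x:ℂ))‖)⁻¹ ≤ (1 - ‖z‖)⁻¹ :=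
        inv_anti₀ hzpos hdle
      calc x ^ (s.re - 1) * (‖Complex.exp (-(a * x)) - z ^ ((1:ℂ)-a)
            * Complex.exp (-(x:ℂ))‖ * (‖1 - z * Complex.exp (-(x:ℂ))‖)⁻¹)
          ≤ x ^ (s.re - 1) * ((Real.exp (-(a.re * x)) + c1 * Real.exp (-(1 * x)))
              * (1 - ‖z‖)⁻¹) := by
            apply mul_le_mul_of_nonneg_left _ (Real.rpow_nonneg hx'.le _)
            apply mul_le_mul h2 h3 (by positivity) (by positivity)
        _ = (1 - ‖z‖)⁻¹ * B x := by rw [hB]; ring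
    refine hGcInt.congr_fun (fun x hx => ?_) measurableSet_Ioi
    exact (integrand_eq hz hz1 hx).symm
  -- final identity
  have hGamma : Complex.Gamma s ≠ 0 := Complex.Gamma_ne_zero_of_re_pos hs
  have hS1 : Summable (fun n : ℕ => z ^ n / (a + (n : ℂ)) ^ s) := hSum1.of_norm
  have hS2 : Summable (fun n : ℕ => z ^ (n + 1) / ((n : ℂ) + 1) ^ s) := hSum2.of_norm
  refine ⟨hSum1, hSum2, hIntgr, ?_⟩
  have h1 := hS1.hasSum.mul_left (Complex.Gamma s)
  have h2 := (hS2.hasSum.mul_left (z ^ (-a))).mul_left (Complex.Gamma s)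
  have h3 := (h1.sub h2).congr_fun fun n => (hIval n)
  have k2 : HasSum (fun n : ℕ => ∫ x in Ioi (0:ℝ), g n x)
      (∫ x in Ioi (0:ℝ),
        (x : ℂ) ^ (s - 1) * Complex.exp (-a * (x : ℂ)) * lerchF z a (x : ℂ)) :=
    hIeq ▸ key
  have hval := k2.unique h3
  rw [hval]
  field_simp
end

section
/- Let z ∈ ℝ with z ≥ 1, let m ∈ ℕ with m ≥ 2, and let s ∈ ℂ with Re s > 0. Then Σ_{k=1}^{m−1} z^k / k^s = z^m Σ_{n=0}^∞ ( (1/n!) Σ_{k=1}^{m−1} k^n z^{−k} ) (s)_n / m^{n+s}, where the series over n converges absolutely; here k^s = exp(s log k) and m^{n+s} = m^n exp(s log m). -/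
open scoped BigOperators

open Complex in
lemma iter_deriv_aux (s : ℂ) : ∀ n : ℕ, ∀ w : ℂ, w.re < 1 →
    iteratedDeriv n (fun w : ℂ => (1 - w) ^ (-s)) w
      = (ascPochhammer ℂ n).eval s * (1 - w) ^ (-s - n) := by
  intro n
  induction n with
  | zero => intro w hw; simp
  | succ n ih =>
    intro w hw
    rw [iteratedDeriv_succ]
    have hopen : IsOpen {w : ℂ | w.re < 1} := isOpen_lt Complex.continuous_re continuous_const
    have hev : iteratedDeriv n (fun w : ℂ => (1 - w) ^ (-s))
        =ᶠ[nhds w] fun w => (ascPochhammer ℂ n).eval s * (1 - w) ^ (-s - n) := by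
      filter_upwards [hopen.mem_nhds hw] with u hu using ih u hu
    rw [hev.deriv_eq]
    have hslit : (1 - w) ∈ Complex.slitPlane := by
      rw [Complex.mem_slitPlane_iff]
      left
      simp only [Complex.sub_re, Complex.one_re]
      linarith
    have h1 : HasDerivAt (fun w : ℂ => 1 - w) (-1) w := (hasDerivAt_id w).const_sub 1
    have hd : HasDerivAt (fun w : ℂ => (1 - w) ^ (-s - n))
        ((-s - n) * (1 - w) ^ (-s - n - 1) * (-1)) w := h1.cpow_const hslit
    rw [(hd.const_mul _).deriv, ascPochhammer_succ_eval]
    have he : (-s - (n:ℂ) - 1) = -s - ((n:ℕ)+1 : ℕ) := by push_cast; ring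
    rw [he]
    push_cast
    ring

open Complex in
lemma hasSum_binom (s : ℂ) {x : ℂ} (hx : ‖x‖ < 1) :
    HasSum (fun n : ℕ => ((n.factorial : ℂ))⁻¹ * (ascPochhammer ℂ n).eval s * x ^ n)
      ((1 - x) ^ (-s)) := by
  have hf : DifferentiableOn ℂ (fun w : ℂ => (1 - w) ^ (-s)) (Metric.ball 0 1) := by
    intro w hw
    have hw1 : ‖w‖ < 1 := by simpa using hw
    have hslit : (1 - w) ∈ Complex.slitPlane := by
      rw [Complex.mem_slitPlane_iff]
      left
      have := Complex.abs_re_le_norm w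
      simp only [Complex.sub_re, Complex.one_re]
      have : w.re < 1 := lt_of_le_of_lt (le_trans (le_abs_self _) this)
        (by simpa using hw1)
      linarith
    exact (((differentiableAt_const (1:ℂ)).sub differentiableAt_id).cpow
      (differentiableAt_const _) hslit).differentiableWithinAt
  have H := Complex.hasSum_taylorSeries_on_ball hf (mem_ball_zero_iff.mpr hx)
  convert H using 2 with n
  · rfl
  rw [iter_deriv_aux s n 0 (by norm_num)]
  simp [smul_eq_mul]
  ring

theorem stmt6 (z : ℝ) (hz : 1 ≤ z) (m : ℕ) (hm : 2 ≤ m) (s : ℂ) (hs : 0 < s.re) :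
    Summable (fun n : ℕ =>
      ‖((1 / (n.factorial : ℂ)) * ∑ k ∈ Finset.Icc 1 (m - 1), (k : ℂ) ^ n * (z : ℂ) ^ (-(k : ℤ))) *
          (ascPochhammer ℂ n).eval s / ((m : ℂ) ^ n * (m : ℂ) ^ s)‖) ∧
    ∑ k ∈ Finset.Icc 1 (m - 1), (z : ℂ) ^ k / (k : ℂ) ^ s
      = (z : ℂ) ^ m *
          ∑' n : ℕ,
            ((1 / (n.factorial : ℂ)) * ∑ k ∈ Finset.Icc 1 (m - 1), (k : ℂ) ^ n * (z : ℂ) ^ (-(k : ℤ))) *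
              (ascPochhammer ℂ n).eval s / ((m : ℂ) ^ n * (m : ℂ) ^ s) := by
  have hmR : (0:ℝ) < m := by positivity
  have hm0 : (m:ℂ) ≠ 0 := by exact_mod_cast (by omega : m ≠ 0)
  have hz0 : (z:ℂ) ≠ 0 := by
    simp only [ne_eq, Complex.ofReal_eq_zero]
    linarith
  have hms : (m:ℂ) ^ s ≠ 0 := by
    simp [Complex.cpow_eq_zero_iff, hm0]
  have key : ∀ k ∈ Finset.Icc 1 (m-1),
      HasSum (fun n : ℕ => ((1 / (n.factorial : ℂ)) * ((k : ℂ) ^ n * (z : ℂ) ^ (-(k : ℤ)))) *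
          (ascPochhammer ℂ n).eval s / ((m : ℂ) ^ n * (m : ℂ) ^ s))
        ((z:ℂ) ^ (-(k:ℤ)) * (((m - k : ℕ):ℂ)) ^ (-s)) := by
    intro k hk
    rw [Finset.mem_Icc] at hk
    have hkm : k < m := by omega
    have hx : ‖((k:ℂ)/m)‖ < 1 := by
      rw [norm_div]
      simp only [Complex.norm_natCast]
      rw [div_lt_one hmR]
      exact_mod_cast hkm
    have H := (hasSum_binom s hx).mul_left ((z:ℂ) ^ (-(k:ℤ)) * (m:ℂ) ^ (-s))
    have hval : (z:ℂ) ^ (-(k:ℤ)) * (((m - k : ℕ):ℂ)) ^ (-s)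
        = (z:ℂ) ^ (-(k:ℤ)) * (m:ℂ) ^ (-s) * (1 - (k:ℂ)/m) ^ (-s) := by
      have h0 : (0:ℝ) ≤ 1 - (k:ℝ)/m := by
        have : (k:ℝ)/m ≤ 1 := by rw [div_le_one hmR]; exact_mod_cast hkm.le
        linarith
      have h3 := Complex.mul_cpow_ofReal_nonneg (le_of_lt hmR) h0 (-s)
      have h4 : (((m - k : ℕ)):ℂ) = (((m:ℝ) * (1 - (k:ℝ)/m) : ℝ) : ℂ) := by
        push_cast [Nat.cast_sub hkm.le]
        field_simp
      rw [h4, Complex.ofReal_mul, h3]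
      push_cast
      ring
    rw [hval]
    convert H using 1
    · rfl
    funext n
    have hmn : (m:ℂ) ^ n ≠ 0 := pow_ne_zero _ hm0
    have hfn : ((n.factorial : ℂ)) ≠ 0 := by exact_mod_cast n.factorial_ne_zero
    rw [Complex.cpow_neg, div_pow]
    field_simp
  have hG : HasSum (fun n : ℕ =>
      ((1 / (n.factorial : ℂ)) * ∑ k ∈ Finset.Icc 1 (m - 1), (k : ℂ) ^ n * (z : ℂ) ^ (-(k : ℤ))) *
          (ascPochhammer ℂ n).eval s / ((m : ℂ) ^ n * (m : ℂ) ^ s))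
      (∑ k ∈ Finset.Icc 1 (m-1), (z:ℂ) ^ (-(k:ℤ)) * (((m - k : ℕ):ℂ)) ^ (-s)) := by
    have := hasSum_sum key
    convert this using 2 with n
    rw [Finset.mul_sum, Finset.sum_mul, Finset.sum_div]
  constructor
  · exact summable_norm_iff.mpr hG.summable
  · rw [hG.tsum_eq, Finset.mul_sum]
    refine Finset.sum_nbij' (fun k => m - k) (fun k => m - k) ?_ ?_ ?_ ?_ ?_
    · intro a ha; simp only [Finset.mem_Icc] at ha ⊢; omega
    · intro a ha; simp only [Finset.mem_Icc] at ha ⊢; omega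
    · intro a ha; simp only [Finset.mem_Icc] at ha; show m - (m - a) = a; omega
    · intro a ha; simp only [Finset.mem_Icc] at ha; show m - (m - a) = a; omega
    · intro a ha
      simp only [Finset.mem_Icc] at ha
      show (z:ℂ) ^ a / (a:ℂ) ^ s
        = (z:ℂ) ^ m * ((z:ℂ) ^ (-((m - a : ℕ):ℤ)) * (((m - (m - a) : ℕ):ℂ)) ^ (-s))
      have hma : m - (m - a) = a := by omega
      rw [hma]
      have hzz : (z:ℂ) ^ m * (z:ℂ) ^ (-((m - a : ℕ):ℤ)) = (z:ℂ) ^ a := by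
        rw [← zpow_natCast (z:ℂ) m, ← zpow_natCast (z:ℂ) a, ← zpow_add₀ hz0]
        congr 1
        omega
      rw [← mul_assoc, hzz, Complex.cpow_neg, div_eq_mul_inv]
end

section
/- Let z ∈ ℝ with z > 1, let m ∈ ℕ with m ≥ 2, and let s ∈ ℂ with Re s > 0. Then Σ_{k=1}^{m−1} z^k/k^s = −z^m Σ_{n=0}^∞ ( c_n(z) − z^{1−m} p_n(z,m) ) (s)_n / m^{n+s}, where the series over n converges, p_n(z,m) := Σ_{k=0}^n c_{n−k}(z) (m−1)^k / k!, k^s = exp(s log k), and m^{n+s} = m^n exp(s log m). -/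
open scoped BigOperators

set_option maxHeartbeats 1600000

lemma norm_geom_pow_term {z : ℝ} (hz : 1 < z) (p k : ℕ) :
    ‖((z : ℂ))⁻¹ ^ (k + 1) * ((k : ℂ) + 1) ^ p‖ = z⁻¹ ^ (k + 1) * ((k : ℝ) + 1) ^ p := by
  have h0z : (0:ℝ) < z := zero_lt_one.trans hz
  have hcast : ((k : ℂ) + 1) = (((k : ℝ) + 1 : ℝ) : ℂ) := by push_cast; ring
  rw [hcast, norm_mul, norm_pow, norm_pow, norm_inv, Complex.norm_real, Complex.norm_real,
    Real.norm_eq_abs, Real.norm_eq_abs, abs_of_pos h0z, abs_of_nonneg (by positivity)]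

lemma summable_geom_pow {z : ℝ} (hz : 1 < z) (p : ℕ) :
    Summable fun k : ℕ => ((z : ℂ))⁻¹ ^ (k + 1) * ((k : ℂ) + 1) ^ p := by
  have h0z : (0:ℝ) < z := zero_lt_one.trans hz
  apply Summable.of_norm
  have hbase : Summable fun j : ℕ => (j : ℝ) ^ p * (z⁻¹) ^ j := by
    apply summable_pow_mul_geometric_of_norm_lt_one
    rw [Real.norm_eq_abs, abs_of_pos (inv_pos.mpr h0z)]
    exact inv_lt_one_of_one_lt₀ hz
  have hshift : Summable fun k : ℕ => ((k + 1 : ℕ) : ℝ) ^ p * (z⁻¹) ^ (k + 1) :=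
    (summable_nat_add_iff 1).mpr hbase
  refine hshift.congr fun k => ?_
  rw [norm_geom_pow_term hz]
  push_cast
  ring

lemma summable_real_aux {z : ℝ} (hz : 1 < z) {t : ℝ} (ht0 : 0 ≤ t) (ht : Real.exp t < z) :
    Summable (fun q : ℕ × ℕ =>
      z⁻¹ ^ (q.1 + 1) * ((q.1 : ℝ) + 1) ^ q.2 * t ^ q.2 / q.2.factorial) := by
  have h0z : (0:ℝ) < z := zero_lt_one.trans hz
  have hnn : 0 ≤ fun q : ℕ × ℕ =>
      z⁻¹ ^ (q.1 + 1) * ((q.1 : ℝ) + 1) ^ q.2 * t ^ q.2 / q.2.factorial := by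
    intro q; positivity
  rw [summable_prod_of_nonneg hnn]
  constructor
  · intro k
    have h := (Real.summable_pow_div_factorial (((k:ℝ)+1) * t)).mul_left (z⁻¹ ^ (k+1))
    apply h.congr
    intro n
    rw [mul_pow]
    ring
  · have hfib : ∀ k : ℕ, (∑' n : ℕ,
        z⁻¹ ^ (k + 1) * ((k : ℝ) + 1) ^ n * t ^ n / n.factorial)
        = (z⁻¹ * Real.exp t) ^ (k + 1) := by
      intro k
      have h : HasSum (fun n : ℕ => (((k:ℝ)+1)*t) ^ n / n.factorial)
          (Real.exp (((k:ℝ)+1)*t)) := by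
        rw [Real.exp_eq_exp_ℝ]
        exact NormedSpace.expSeries_div_hasSum_exp _
      have h2 := (h.mul_left (z⁻¹ ^ (k+1))).tsum_eq
      have h3 : (∑' n : ℕ, z⁻¹ ^ (k + 1) * ((k : ℝ) + 1) ^ n * t ^ n / n.factorial)
          = ∑' n : ℕ, z⁻¹ ^ (k + 1) * ((((k:ℝ)+1)*t) ^ n / n.factorial) :=
        tsum_congr fun n => by rw [mul_pow]; ring
      rw [h3, h2, mul_pow]
      congr 1
      rw [← Real.exp_nat_mul]
      congr 1
      push_cast; ring
    simp only [hfib]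
    have hr : 0 ≤ z⁻¹ * Real.exp t := by positivity
    have hr1 : z⁻¹ * Real.exp t < 1 := by
      rw [mul_comm, ← div_eq_mul_inv]
      exact (div_lt_one h0z).mpr ht
    exact (summable_nat_add_iff 1).mpr (summable_geometric_of_lt_one hr hr1)

lemma hasSum_congr' {α : Type*} [AddCommMonoid α] [TopologicalSpace α]
    {f g : ℕ → α} {a b : α} (h : HasSum f a) (hfg : ∀ n, f n = g n) (hab : a = b) :
    HasSum g b := by
  rw [← funext hfg, ← hab]; exact h

lemma hasSum_main {z : ℝ} (hz : 1 < z) {x : ℂ} (hx : ‖x‖ < Real.log z) :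
    HasSum (fun n : ℕ =>
      (-(∑' k : ℕ, ((z:ℂ))⁻¹ ^ (k+1) * ((k:ℂ)+1) ^ n) / (n.factorial : ℂ)) * x ^ n)
      (1 / (1 - (z:ℂ) * Complex.exp (-x))) := by
  have h0z : (0:ℝ) < z := zero_lt_one.trans hz
  have hz0 : (z:ℂ) ≠ 0 := by exact_mod_cast h0z.ne'
  have hte : Real.exp ‖x‖ < z := by
    rw [← Real.exp_log h0z]; exact Real.exp_lt_exp.mpr hx
  set F : ℕ × ℕ → ℂ := fun q =>
    -(((z:ℂ))⁻¹ ^ (q.1+1) * ((q.1:ℂ)+1) ^ q.2 * x ^ q.2 / (q.2.factorial : ℂ)) with hFdef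
  have hF : Summable F := by
    apply Summable.of_norm
    refine (summable_real_aux hz (norm_nonneg x) hte).congr fun q => ?_
    rw [hFdef]
    simp only []
    rw [norm_neg, norm_div, norm_mul, norm_geom_pow_term hz, norm_pow,
      Complex.norm_natCast]
  set w : ℂ := (z:ℂ)⁻¹ * Complex.exp x with hwdef
  have hwn : ‖w‖ < 1 := by
    rw [hwdef, norm_mul, norm_inv, Complex.norm_real, Real.norm_eq_abs, abs_of_pos h0z,
      Complex.norm_exp]
    have h1 : Real.exp x.re ≤ Real.exp ‖x‖ :=
      Real.exp_le_exp.mpr (Complex.re_le_norm x)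
    calc z⁻¹ * Real.exp x.re ≤ z⁻¹ * Real.exp ‖x‖ := by
          exact mul_le_mul_of_nonneg_left h1 (inv_pos.mpr h0z).le
      _ < z⁻¹ * z := by
          exact mul_lt_mul_of_pos_left (hte) (inv_pos.mpr h0z)
      _ = 1 := inv_mul_cancel₀ h0z.ne'
  have h1w : (1:ℂ) - w ≠ 0 := by
    intro h
    have : w = 1 := by linear_combination -h
    rw [this] at hwn; simp at hwn
  have hfact : (1 - (z:ℂ) * Complex.exp (-x)) = (-(z:ℂ) * Complex.exp (-x)) * (1 - w) := by
    rw [hwdef]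
    simp only [Complex.exp_neg]
    field_simp
    ring
  have hgeo : HasSum (fun k : ℕ => -w * w ^ k) (-w * (1 - w)⁻¹) :=
    (hasSum_geometric_of_norm_lt_one hwn).mul_left (-w)
  have hval : -w * (1 - w)⁻¹ = 1 / (1 - (z:ℂ) * Complex.exp (-x)) := by
    rw [hfact, one_div, mul_inv]
    congr 1
    rw [hwdef, mul_inv, Complex.exp_neg, inv_inv, inv_neg]
    ring
  have hrow : ∀ k : ℕ, HasSum (fun n : ℕ => F (k, n)) (-w * w ^ k) := by
    intro k
    have he : HasSum (fun n : ℕ => (((k:ℂ)+1) * x) ^ n / (n.factorial : ℂ))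
        (Complex.exp (((k:ℂ)+1) * x)) := by
      rw [Complex.exp_eq_exp_ℂ]
      exact NormedSpace.expSeries_div_hasSum_exp _
    refine hasSum_congr' (he.mul_left (-(((z:ℂ))⁻¹ ^ (k+1)))) (fun n => ?_) ?_
    · rw [hFdef]; simp only []; rw [mul_pow]; ring
    · have hexp : Complex.exp (((k:ℂ)+1) * x) = Complex.exp x ^ (k+1) := by
        have : ((k:ℂ)+1) = ((k+1 : ℕ) : ℂ) := by push_cast; ring
        rw [this, Complex.exp_nat_mul]
      rw [hexp, hwdef, mul_pow, pow_succ]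
      ring
  have hFS : HasSum F (1 / (1 - (z:ℂ) * Complex.exp (-x))) := by
    have hcol := hF.hasSum
    have h2 : HasSum (fun k : ℕ => -w * w ^ k) (∑' q, F q) := hcol.prod_fiberwise hrow
    have h3 : (∑' q, F q) = -w * (1 - w)⁻¹ := h2.unique hgeo
    rw [h3, hval] at hcol
    exact hcol
  have hswap : HasSum (F ∘ (Equiv.prodComm ℕ ℕ)) (1 / (1 - (z:ℂ) * Complex.exp (-x))) :=
    ((Equiv.prodComm ℕ ℕ).hasSum_iff).mpr hFS
  refine hswap.prod_fiberwise fun n => ?_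
  have hS := (summable_geom_pow hz n).hasSum.mul_right (-(x ^ n / (n.factorial : ℂ)))
  refine hasSum_congr' hS (fun k => ?_) ?_
  · rw [hFdef]; simp only [Function.comp, Equiv.prodComm_apply, Prod.swap]; ring
  · ring

lemma summable_geom_pow_real {z : ℝ} (hz : 1 < z) (p : ℕ) :
    Summable fun k : ℕ => z⁻¹ ^ (k + 1) * ((k : ℝ) + 1) ^ p := by
  have h0z : (0:ℝ) < z := zero_lt_one.trans hz
  have hbase : Summable fun j : ℕ => (j : ℝ) ^ p * (z⁻¹) ^ j := by
    apply summable_pow_mul_geometric_of_norm_lt_one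
    rw [Real.norm_eq_abs, abs_of_pos (inv_pos.mpr h0z)]
    exact inv_lt_one_of_one_lt₀ hz
  refine ((summable_nat_add_iff 1).mpr hbase).congr fun k => ?_
  push_cast
  ring

lemma cCoeff_eq {z : ℝ} (hz : 1 < z) (n : ℕ) :
    cCoeff (z : ℂ) n
      = -(∑' k : ℕ, ((z:ℂ))⁻¹ ^ (k+1) * ((k:ℂ)+1) ^ n) / (n.factorial : ℂ) := by
  have h0z : (0:ℝ) < z := zero_lt_one.trans hz
  have hlz : 0 < Real.log z := Real.log_pos hz
  set ρ : ℝ := Real.log z / 2 with hρdef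
  have hρ : 0 < ρ := half_pos hlz
  have hρlt : ρ < Real.log z := half_lt_self hlz
  have hexpρ : Real.exp ρ < z := by
    rw [← Real.exp_log h0z]; exact Real.exp_lt_exp.mpr hρlt
  set a : ℕ → ℂ := fun p =>
    -(∑' k : ℕ, ((z:ℂ))⁻¹ ^ (k+1) * ((k:ℂ)+1) ^ p) / (p.factorial : ℂ) with hadef
  set R : NNReal := ⟨ρ, hρ.le⟩ with hRdef
  have hp : HasFPowerSeriesOnBall (fun x : ℂ => 1 / (1 - (z:ℂ) * Complex.exp (-x)))
      (FormalMultilinearSeries.ofScalars ℂ a) 0 R := by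
    constructor
    · apply FormalMultilinearSeries.le_radius_of_summable_norm
      have hfam := summable_real_aux hz hρ.le hexpρ
      have hmarg := hfam.prod_symm.prod
      apply Summable.of_nonneg_of_le (fun p => by positivity) _ hmarg
      intro p
      rw [FormalMultilinearSeries.ofScalars_norm]
      have hnormsum : Summable fun k : ℕ => ‖((z:ℂ))⁻¹ ^ (k+1) * ((k:ℂ)+1) ^ p‖ :=
        (summable_geom_pow_real hz p).congr fun k => (norm_geom_pow_term hz p k).symm
      have hnorm : ‖a p‖ ≤ (∑' k : ℕ, z⁻¹ ^ (k+1) * ((k:ℝ)+1) ^ p) / (p.factorial : ℝ) := by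
        rw [hadef]
        simp only []
        rw [norm_div, norm_neg, Complex.norm_natCast, div_eq_mul_inv, div_eq_mul_inv]
        refine mul_le_mul_of_nonneg_right ?_ (by positivity)
        calc ‖∑' k : ℕ, ((z:ℂ))⁻¹ ^ (k+1) * ((k:ℂ)+1) ^ p‖
            ≤ ∑' k : ℕ, ‖((z:ℂ))⁻¹ ^ (k+1) * ((k:ℂ)+1) ^ p‖ := norm_tsum_le_tsum_norm hnormsum
          _ = ∑' k : ℕ, z⁻¹ ^ (k+1) * ((k:ℝ)+1) ^ p :=
              tsum_congr fun k => norm_geom_pow_term hz p k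
      have hcoe : ((R : ℝ)) = ρ := rfl
      calc ‖a p‖ * (R : ℝ) ^ p
          ≤ ((∑' k : ℕ, z⁻¹ ^ (k+1) * ((k:ℝ)+1) ^ p) / (p.factorial : ℝ)) * ρ ^ p := by
            rw [hcoe]
            apply mul_le_mul_of_nonneg_right hnorm (by positivity)
        _ = ∑' k : ℕ, z⁻¹ ^ (k+1) * ((k:ℝ)+1) ^ p * ρ ^ p / (p.factorial : ℝ) := by
            rw [div_mul_eq_mul_div, ← tsum_mul_right, ← tsum_div_const]
        _ = ∑' k : ℕ, z⁻¹ ^ ((p, k).swap.1 + 1) * (((p, k).swap.1 : ℝ) + 1) ^ (p, k).swap.2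
              * ρ ^ (p, k).swap.2 / ((p, k).swap.2.factorial : ℝ) := rfl
    · exact_mod_cast hρ
    · intro y hy
      rw [mem_emetric_ball_zero_iff] at hy
      have hy' : ‖y‖ < Real.log z := by
        have : ‖y‖ < ρ := by exact_mod_cast hy
        exact this.trans hρlt
      rw [zero_add]
      refine hasSum_congr' (hasSum_main hz hy') (fun p => ?_) rfl
      rw [FormalMultilinearSeries.ofScalars_apply_eq, smul_eq_mul]
  have hfs := hp.factorial_smul (1:ℂ) n
  rw [FormalMultilinearSeries.ofScalars_apply_eq, one_pow, smul_eq_mul, mul_one] at hfs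
  show iteratedDeriv n (fun x => 1 / (1 - (z:ℂ) * Complex.exp (-x))) 0 / (n.factorial : ℂ) = a n
  rw [iteratedDeriv_eq_iteratedFDeriv, ← hfs, nsmul_eq_mul]
  exact mul_div_cancel_left₀ _ (Nat.cast_ne_zero.mpr n.factorial_ne_zero)

lemma iteratedDeriv_one_sub_cpow (s : ℂ) (n : ℕ) :
    ∀ w ∈ Metric.ball (0:ℂ) 1,
      iteratedDeriv n (fun w : ℂ => (1 - w) ^ (-s)) w
        = (Polynomial.eval s (ascPochhammer ℂ n)) * (1 - w) ^ (-s - n) := by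
  induction n with
  | zero =>
    intro w hw
    simp [iteratedDeriv_zero]
  | succ n ih =>
    intro w hw
    have hslit : ∀ y ∈ Metric.ball (0:ℂ) 1, (1 - y) ∈ Complex.slitPlane := by
      intro y hy
      refine Complex.mem_slitPlane_iff.mpr (Or.inl ?_)
      have h1 : y.re ≤ ‖y‖ := Complex.re_le_norm y
      have h2 : ‖y‖ < 1 := by simpa using hy
      simp only [Complex.sub_re, Complex.one_re]
      linarith
    rw [iteratedDeriv_succ]
    have hev : iteratedDeriv n (fun w : ℂ => (1 - w) ^ (-s)) =ᶠ[nhds w]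
        fun y => (Polynomial.eval s (ascPochhammer ℂ n)) * (1 - y) ^ (-s - n) :=
      Filter.eventuallyEq_of_mem (Metric.isOpen_ball.mem_nhds hw) ih
    rw [hev.deriv_eq]
    have h1 : HasDerivAt (fun y : ℂ => 1 - y) (-1) w := (hasDerivAt_id w).const_sub 1
    have h2 : HasDerivAt (fun y : ℂ => (1 - y) ^ (-s - n))
        ((-s - n) * (1 - w) ^ (-s - n - 1) * (-1)) w :=
      h1.cpow_const (hslit w hw)
    have h3 := (h2.const_mul (Polynomial.eval s (ascPochhammer ℂ n))).deriv
    rw [h3, ascPochhammer_succ_right]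
    simp only [Polynomial.eval_mul, Polynomial.eval_add, Polynomial.eval_X,
      Polynomial.eval_natCast]
    have hexp : -s - n - 1 = -s - (n + 1 : ℕ) := by push_cast; ring
    rw [hexp]
    ring

lemma hasSum_one_sub_cpow (s : ℂ) {t : ℂ} (ht : ‖t‖ < 1) :
    HasSum (fun n : ℕ => (Polynomial.eval s (ascPochhammer ℂ n)) * t ^ n / n.factorial)
      ((1 - t) ^ (-s)) := by
  have hd : DifferentiableOn ℂ (fun w : ℂ => (1 - w) ^ (-s)) (Metric.ball 0 1) := by
    intro y hy
    have hslit : (1 - y) ∈ Complex.slitPlane := by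
      refine Complex.mem_slitPlane_iff.mpr (Or.inl ?_)
      have h1 : y.re ≤ ‖y‖ := Complex.re_le_norm y
      have h2 : ‖y‖ < 1 := by simpa using hy
      simp only [Complex.sub_re, Complex.one_re]
      linarith
    exact (((differentiableAt_const (1:ℂ)).sub differentiableAt_id).cpow
      (differentiableAt_const _) hslit).differentiableWithinAt
  have htball : t ∈ Metric.ball (0:ℂ) 1 := by simpa using ht
  have H := Complex.hasSum_taylorSeries_on_ball hd htball
  have h0 : (0:ℂ) ∈ Metric.ball (0:ℂ) 1 := by simp
  refine hasSum_congr' H (fun n => ?_) rfl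
  rw [iteratedDeriv_one_sub_cpow s n 0 h0]
  rw [sub_zero, sub_zero, Complex.one_cpow]
  simp only [smul_eq_mul]
  ring

lemma core_binom (x y : ℂ) (n : ℕ) :
    ∑ j ∈ Finset.range (n+1),
        y ^ (n-j) * x ^ j / (((n-j).factorial : ℂ) * (j.factorial : ℂ))
      = (x + y) ^ n / (n.factorial : ℂ) := by
  rw [add_pow, Finset.sum_div]
  apply Finset.sum_congr rfl
  intro j hj
  have hjn : j ≤ n := Finset.mem_range_succ_iff.mp hj
  rw [Nat.cast_choose ℂ hjn]
  have h1 : (((n-j).factorial : ℂ)) ≠ 0 := Nat.cast_ne_zero.mpr (Nat.factorial_ne_zero _)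
  have h2 : ((j.factorial : ℂ)) ≠ 0 := Nat.cast_ne_zero.mpr (Nat.factorial_ne_zero _)
  have h3 : ((n.factorial : ℂ)) ≠ 0 := Nat.cast_ne_zero.mpr (Nat.factorial_ne_zero _)
  field_simp

lemma pPoly_eq {z : ℝ} (hz : 1 < z) (m : ℕ) (n : ℕ) :
    pPoly (z:ℂ) (m:ℂ) n
      = -(∑' k : ℕ, ((z:ℂ))⁻¹ ^ (k+1) * ((k:ℂ)+(m:ℂ)) ^ n) / (n.factorial : ℂ) := by
  unfold pPoly
  have hstep : ∀ j ∈ Finset.range (n+1),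
      cCoeff (z:ℂ) (n-j) * ((m:ℂ)-1) ^ j / (j.factorial : ℂ)
        = ∑' k : ℕ, (((z:ℂ))⁻¹ ^ (k+1) * ((k:ℂ)+1) ^ (n-j))
            * (-(((m:ℂ)-1) ^ j / (((n-j).factorial : ℂ) * (j.factorial : ℂ)))) := by
    intro j hj
    rw [cCoeff_eq hz, tsum_mul_right]
    ring
  rw [Finset.sum_congr rfl hstep, ← Summable.tsum_finsetSum
    (fun j _ => (summable_geom_pow hz (n-j)).mul_right _)]
  have hRHS : -(∑' k : ℕ, ((z:ℂ))⁻¹ ^ (k+1) * ((k:ℂ)+(m:ℂ)) ^ n) / (n.factorial : ℂ)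
      = ∑' k : ℕ, -(((z:ℂ))⁻¹ ^ (k+1) * ((k:ℂ)+(m:ℂ)) ^ n / (n.factorial : ℂ)) := by
    rw [neg_div, ← tsum_div_const, ← tsum_neg]
  rw [hRHS]
  apply tsum_congr
  intro k
  have hcore := core_binom ((m:ℂ)-1) ((k:ℂ)+1) n
  calc ∑ j ∈ Finset.range (n+1), (((z:ℂ))⁻¹ ^ (k+1) * ((k:ℂ)+1) ^ (n-j))
          * (-(((m:ℂ)-1) ^ j / (((n-j).factorial : ℂ) * (j.factorial : ℂ))))
      = -(((z:ℂ))⁻¹ ^ (k+1)) * ∑ j ∈ Finset.range (n+1),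
          ((k:ℂ)+1) ^ (n-j) * ((m:ℂ)-1) ^ j / (((n-j).factorial : ℂ) * (j.factorial : ℂ)) := by
        rw [Finset.mul_sum]
        apply Finset.sum_congr rfl
        intro j _
        ring
    _ = -(((z:ℂ))⁻¹ ^ (k+1) * ((k:ℂ)+(m:ℂ)) ^ n / (n.factorial : ℂ)) := by
        rw [hcore]
        have : ((m:ℂ)-1) + ((k:ℂ)+1) = (k:ℂ)+(m:ℂ) := by ring
        rw [this]
        ring

lemma dEq {z : ℝ} (hz : 1 < z) {m : ℕ} (hm : 2 ≤ m) (n : ℕ) :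
    cCoeff (z:ℂ) n - (z:ℂ) ^ ((1:ℂ) - (m:ℂ)) * pPoly (z:ℂ) (m:ℂ) n
      = -(∑ k ∈ Finset.range (m-1), ((z:ℂ))⁻¹ ^ (k+1) * ((k:ℂ)+1) ^ n)
          / (n.factorial : ℂ) := by
  have h0z : (0:ℝ) < z := zero_lt_one.trans hz
  have hz0 : (z:ℂ) ≠ 0 := by exact_mod_cast h0z.ne'
  have hcpow : (z:ℂ) ^ ((1:ℂ) - (m:ℂ)) = (z:ℂ) ^ ((1:ℤ) - (m:ℤ)) := by
    have h : ((1:ℂ) - (m:ℂ)) = (((1 - (m:ℤ)) : ℤ) : ℂ) := by push_cast; ring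
    rw [h, Complex.cpow_intCast]
  rw [cCoeff_eq hz, pPoly_eq hz m, hcpow]
  have hzu : ∀ k : ℕ, (z:ℂ) ^ ((1:ℤ) - (m:ℤ)) * ((z:ℂ))⁻¹ ^ (k+1) = ((z:ℂ))⁻¹ ^ (k+m) := by
    intro k
    rw [← zpow_natCast ((z:ℂ))⁻¹ (k+1), ← zpow_natCast ((z:ℂ))⁻¹ (k+m), inv_zpow, inv_zpow,
      ← zpow_neg, ← zpow_neg, ← zpow_add₀ hz0]
    congr 1
    push_cast
    ring
  have hpull : (z:ℂ) ^ ((1:ℤ)-(m:ℤ))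
      * (-(∑' k : ℕ, ((z:ℂ))⁻¹ ^ (k+1) * ((k:ℂ)+(m:ℂ)) ^ n) / (n.factorial : ℂ))
      = -(∑' k : ℕ, ((z:ℂ))⁻¹ ^ (k+m) * ((k:ℂ)+(m:ℂ)) ^ n) / (n.factorial : ℂ) := by
    have h1 : (∑' k : ℕ, ((z:ℂ))⁻¹ ^ (k+m) * ((k:ℂ)+(m:ℂ)) ^ n)
        = (z:ℂ) ^ ((1:ℤ)-(m:ℤ)) * ∑' k : ℕ, ((z:ℂ))⁻¹ ^ (k+1) * ((k:ℂ)+(m:ℂ)) ^ n := by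
      rw [← tsum_mul_left]
      exact tsum_congr fun k => by rw [← mul_assoc, hzu k]
    rw [h1]
    ring
  rw [hpull]
  have hsplit := Summable.sum_add_tsum_nat_add (f := fun k : ℕ => ((z:ℂ))⁻¹ ^ (k+1) * ((k:ℂ)+1) ^ n)
    (m-1) (summable_geom_pow hz n)
  have hshift : ∀ k : ℕ,
      ((z:ℂ))⁻¹ ^ ((k+(m-1))+1) * (((k+(m-1):ℕ):ℂ)+1) ^ n
        = ((z:ℂ))⁻¹ ^ (k+m) * ((k:ℂ)+(m:ℂ)) ^ n := by
    intro k
    have h1 : (k+(m-1))+1 = k+m := by omega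
    have h2 : (((k+(m-1):ℕ):ℂ)+1) = (k:ℂ)+(m:ℂ) := by
      push_cast [Nat.cast_sub (show (1:ℕ) ≤ m by omega)]
      ring
    rw [h1, h2]
  have hsplit' : (∑' k : ℕ, ((z:ℂ))⁻¹ ^ (k+1) * ((k:ℂ)+1) ^ n)
      = (∑ k ∈ Finset.range (m-1), ((z:ℂ))⁻¹ ^ (k+1) * ((k:ℂ)+1) ^ n)
        + ∑' k : ℕ, ((z:ℂ))⁻¹ ^ (k+m) * ((k:ℂ)+(m:ℂ)) ^ n := by
    rw [← hsplit]
    congr 1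
    exact tsum_congr fun k => hshift k
  rw [hsplit']
  ring

theorem stmt9 (z : ℝ) (hz : 1 < z) (m : ℕ) (hm : 2 ≤ m) (s : ℂ) (hs : 0 < s.re) :
    Summable (fun n : ℕ =>
      (cCoeff (z : ℂ) n - (z : ℂ) ^ ((1 : ℂ) - (m : ℂ)) * pPoly (z : ℂ) (m : ℂ) n) *
        (ascPochhammer ℂ n).eval s / ((m : ℂ) ^ n * (m : ℂ) ^ s)) ∧
    ∑ k ∈ Finset.Icc 1 (m - 1), (z : ℂ) ^ k / (k : ℂ) ^ s
      = -(z : ℂ) ^ m *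
          ∑' n : ℕ,
            (cCoeff (z : ℂ) n - (z : ℂ) ^ ((1 : ℂ) - (m : ℂ)) * pPoly (z : ℂ) (m : ℂ) n) *
              (ascPochhammer ℂ n).eval s / ((m : ℂ) ^ n * (m : ℂ) ^ s) := by
  have h0z : (0:ℝ) < z := zero_lt_one.trans hz
  have hz0 : (z:ℂ) ≠ 0 := by exact_mod_cast h0z.ne'
  have hm0' : 0 < m := by omega
  have hm0 : (m:ℂ) ≠ 0 := Nat.cast_ne_zero.mpr (by omega)
  have hms : (m:ℂ) ^ s ≠ 0 := by
    intro h
    rcases (Complex.cpow_eq_zero_iff _ _).mp h with ⟨h1, _⟩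
    exact hm0 h1
  set N : ℕ := m - 1 with hN
  set G : ℕ → ℕ → ℂ := fun k n =>
    (-(((z:ℂ))⁻¹ ^ (k+1)) * (((m:ℂ) ^ s)⁻¹))
      * ((Polynomial.eval s (ascPochhammer ℂ n)) * (((k:ℂ)+1)/(m:ℂ)) ^ n
          / (n.factorial : ℂ)) with hGdef
  have hterm : ∀ n : ℕ,
      (cCoeff (z : ℂ) n - (z : ℂ) ^ ((1 : ℂ) - (m : ℂ)) * pPoly (z : ℂ) (m : ℂ) n) *
        (ascPochhammer ℂ n).eval s / ((m : ℂ) ^ n * (m : ℂ) ^ s)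
        = ∑ k ∈ Finset.range N, G k n := by
    intro n
    rw [dEq hz hm n]
    have hmn : ((m:ℂ)) ^ n ≠ 0 := pow_ne_zero _ hm0
    have hfac : (n.factorial : ℂ) ≠ 0 := Nat.cast_ne_zero.mpr n.factorial_ne_zero
    have hfac2 : (-(∑ k ∈ Finset.range N, ((z:ℂ))⁻¹ ^ (k+1) * ((k:ℂ)+1) ^ n)
          / (n.factorial : ℂ)) * (Polynomial.eval s (ascPochhammer ℂ n))
          / ((m : ℂ) ^ n * (m : ℂ) ^ s)
        = ∑ k ∈ Finset.range N, (((z:ℂ))⁻¹ ^ (k+1) * ((k:ℂ)+1) ^ n)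
            * (-(Polynomial.eval s (ascPochhammer ℂ n)
                / ((n.factorial : ℂ) * ((m:ℂ) ^ n * (m:ℂ) ^ s)))) := by
      rw [← Finset.sum_mul]
      field_simp
    rw [hfac2]
    apply Finset.sum_congr rfl
    intro k _
    rw [hGdef]
    simp only []
    rw [div_pow]
    field_simp
  have hG : ∀ k ∈ Finset.range N, HasSum (G k)
      ((-(((z:ℂ))⁻¹ ^ (k+1)) * (((m:ℂ) ^ s)⁻¹)) * ((1 - ((k:ℂ)+1)/(m:ℂ)) ^ (-s))) := by
    intro k hk
    have hkN : k < N := Finset.mem_range.mp hk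
    have hnorm : ‖((k:ℂ)+1)/(m:ℂ)‖ < 1 := by
      have hc : ((k:ℂ)+1) = ((k+1:ℕ):ℂ) := by push_cast; ring
      rw [hc, norm_div, Complex.norm_natCast, Complex.norm_natCast]
      rw [div_lt_one (by exact_mod_cast hm0')]
      exact_mod_cast (by omega : k + 1 < m)
    exact (hasSum_one_sub_cpow s hnorm).mul_left _
  have hHasSum : HasSum (fun n => ∑ k ∈ Finset.range N, G k n)
      (∑ k ∈ Finset.range N,
        (-(((z:ℂ))⁻¹ ^ (k+1)) * (((m:ℂ) ^ s)⁻¹)) * ((1 - ((k:ℂ)+1)/(m:ℂ)) ^ (-s))) :=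
    hasSum_sum fun k hk => hG k hk
  have hT : HasSum (fun n : ℕ =>
      (cCoeff (z : ℂ) n - (z : ℂ) ^ ((1 : ℂ) - (m : ℂ)) * pPoly (z : ℂ) (m : ℂ) n) *
        (ascPochhammer ℂ n).eval s / ((m : ℂ) ^ n * (m : ℂ) ^ s))
      (∑ k ∈ Finset.range N,
        (-(((z:ℂ))⁻¹ ^ (k+1)) * (((m:ℂ) ^ s)⁻¹)) * ((1 - ((k:ℂ)+1)/(m:ℂ)) ^ (-s))) := by
    rw [funext hterm]
    exact hHasSum
  refine ⟨hT.summable, ?_⟩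
  rw [hT.tsum_eq, Finset.mul_sum]
  have hper : ∀ k ∈ Finset.range N,
      -(z:ℂ) ^ m * ((-(((z:ℂ))⁻¹ ^ (k+1)) * (((m:ℂ) ^ s)⁻¹))
          * ((1 - ((k:ℂ)+1)/(m:ℂ)) ^ (-s)))
        = (z:ℂ) ^ (m-1-k) / (((m-1-k:ℕ):ℂ)) ^ s := by
    intro k hk
    have hkN : k < N := Finset.mem_range.mp hk
    have hk1m : k + 1 < m := by omega
    have hcast : (((m-1-k:ℕ)):ℂ) = (m:ℂ) - (k:ℂ) - 1 := by
      push_cast [Nat.cast_sub (show k ≤ m-1 by omega), Nat.cast_sub (show 1 ≤ m by omega)]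
      ring
    have hstep1 : (1 - ((k:ℂ)+1)/(m:ℂ)) = (((m-1-k:ℕ)):ℂ)/(m:ℂ) := by
      rw [hcast]
      field_simp
      ring
    have e1 : ((((m-1-k:ℕ)):ℂ)/(m:ℂ)) = ((((m-1-k:ℕ):ℝ)):ℂ) * ((((m:ℝ))⁻¹ : ℝ):ℂ) := by
      push_cast; ring
    have e2 := Complex.mul_cpow_ofReal_nonneg (Nat.cast_nonneg (m-1-k))
      (inv_nonneg.mpr (Nat.cast_nonneg m)) (-s)
    have e3 : ((((m:ℝ))⁻¹ : ℝ) : ℂ) = ((m:ℂ))⁻¹ := by push_cast; ring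
    have e4 : ((m:ℂ))⁻¹ ^ (-s) = (((m:ℂ)) ^ (-s))⁻¹ :=
      Complex.inv_cpow _ _ (by rw [Complex.natCast_arg]; exact Real.pi_ne_zero.symm)
    have e5 : ((((m-1-k:ℕ):ℝ)):ℂ) = (((m-1-k:ℕ)):ℂ) := by push_cast; ring
    have hsplit : (1 - ((k:ℂ)+1)/(m:ℂ)) ^ (-s)
        = (((m-1-k:ℕ)):ℂ) ^ (-s) * (((m:ℂ)) ^ (-s))⁻¹ := by
      rw [hstep1, e1, e2, e3, e4, e5]
    rw [hsplit]
    have hzp : (z:ℂ) ^ m * (((z:ℂ))⁻¹) ^ (k+1) = (z:ℂ) ^ (m-1-k) := by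
      have h1 : m - (k+1) = m-1-k := by omega
      rw [inv_pow, ← h1, pow_sub₀ _ hz0 (by omega : k+1 ≤ m)]
    have hmneg : ((m:ℂ)) ^ (-s) = (((m:ℂ)) ^ s)⁻¹ := Complex.cpow_neg _ _
    have hjneg : (((m-1-k:ℕ)):ℂ) ^ (-s) = ((((m-1-k:ℕ)):ℂ) ^ s)⁻¹ := Complex.cpow_neg _ _
    rw [hmneg, hjneg, inv_inv, ← hzp, div_eq_mul_inv]
    have hcancel : (((m:ℂ)) ^ s)⁻¹ * ((m:ℂ)) ^ s = 1 := inv_mul_cancel₀ hms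
    linear_combination ((z:ℂ) ^ m * (((z:ℂ))⁻¹) ^ (k+1) * (((((m-1-k:ℕ)):ℂ)) ^ s)⁻¹) * hcancel
  rw [Finset.sum_congr rfl hper]
  have hreflect := Finset.sum_range_reflect
    (fun i => (z:ℂ) ^ (i+1) / (((i+1:ℕ):ℂ)) ^ s) N
  have hstep2 : ∑ k ∈ Finset.range N, (z:ℂ) ^ (m-1-k) / (((m-1-k:ℕ)):ℂ) ^ s
      = ∑ k ∈ Finset.range N, (z:ℂ) ^ (k+1) / (((k+1:ℕ)):ℂ) ^ s := by
    rw [← hreflect]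
    apply Finset.sum_congr rfl
    intro k hk
    have hkN : k < N := Finset.mem_range.mp hk
    have h1 : m-1-k = (N-1-k)+1 := by omega
    rw [h1]
  rw [hstep2]
  have hIcc : Finset.Icc 1 (m-1) = Finset.Ico 1 m := by
    rw [← Finset.Ico_add_one_right_eq_Icc]
    congr 1
    omega
  rw [hIcc, Finset.sum_Ico_eq_sum_range]
  refine Finset.sum_congr (by rw [hN]) fun k _ => by rw [Nat.add_comm 1 k]
end

section
/- Let z ∈ ℂ with z ∉ (-∞,0] and z ≠ 1. Then c_0(z) = 1/(1−z) and, for every n ≥ 1, c_n(z) = (z/(1−z)) Σ_{k=0}^{n−1} ((−1)^{n−k}/(n−k)!) c_k(z). -/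
open scoped BigOperators

theorem stmt10 (z : ℂ) (hz : ∀ x : ℝ, x ≤ 0 → z ≠ (x : ℂ)) (hz1 : z ≠ 1) :
    cCoeff z 0 = 1 / (1 - z) ∧
    ∀ n : ℕ, 1 ≤ n →
      cCoeff z n
        = z / (1 - z) *
            ∑ k ∈ Finset.range n, ((-1 : ℂ) ^ (n - k) / ((n - k).factorial : ℂ)) * cCoeff z k := by
  classical
  set f : ℂ → ℂ := fun x => 1 / (1 - z * Complex.exp (-x)) with hfdef
  have h1z : (1 : ℂ) - z ≠ 0 := sub_ne_zero.mpr (Ne.symm hz1)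
  have hden0 : (1 : ℂ) - z * Complex.exp (-(0:ℂ)) ≠ 0 := by simpa using h1z
  have hcont : Continuous fun x : ℂ => 1 - z * Complex.exp (-x) := by continuity
  have hden : ∀ᶠ x in nhds (0:ℂ), 1 - z * Complex.exp (-x) ≠ 0 :=
    hcont.continuousAt.eventually_ne hden0
  have hA : AnalyticAt ℂ f 0 := by
    apply AnalyticAt.div analyticAt_const
    · exact analyticAt_const.sub (analyticAt_const.mul ((analyticAt_id.neg).cexp))
    · exact hden0
  obtain ⟨p, hp⟩ := hA
  obtain ⟨r, hpr⟩ := hp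
  have hp : HasFPowerSeriesAt f p 0 := ⟨r, hpr⟩
  set a : ℕ → ℂ := fun n => p.coeff n with ha
  -- cCoeff = a
  have hcoeff : ∀ n, cCoeff z n = a n := by
    intro n
    have h1 := hpr.factorial_smul (1 : ℂ) n
    have h2 : iteratedFDeriv ℂ n f 0 (fun _ => (1:ℂ)) = iteratedDeriv n f 0 := by
      rw [iteratedFDeriv_apply_eq_iteratedDeriv_mul_prod]; simp
    have h3 : iteratedDeriv n f 0 = (n.factorial : ℂ) * a n := by
      rw [← h2, ← h1, show p n (fun _ => (1:ℂ)) = p.coeff n from rfl, nsmul_eq_mul]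
    have hfac : ((n.factorial : ℂ)) ≠ 0 := Nat.cast_ne_zero.mpr n.factorial_ne_zero
    rw [cCoeff, taylorCoeff]
    rw [show (fun x => 1 / (1 - z * Complex.exp (-x))) = f from rfl, h3]
    field_simp
  set S : ℕ → ℂ := fun n =>
    ∑ k ∈ Finset.range (n+1), ((-1:ℂ)^(n-k) / ((n-k).factorial : ℂ)) * a k with hS
  set c' : ℕ → ℂ := fun n => z * S n + if n = 0 then 1 else 0 with hc'
  have hradius : (0 : ENNReal) < p.radius := lt_of_lt_of_le hpr.r_pos hpr.r_le
  have hball : ∀ᶠ x in nhds (0:ℂ), x ∈ EMetric.ball (0:ℂ) p.radius :=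
    EMetric.ball_mem_nhds 0 hradius
  have hq : HasFPowerSeriesAt f (FormalMultilinearSeries.ofScalars ℂ c') 0 := by
    rw [hasFPowerSeriesAt_iff]
    filter_upwards [hden, hball, hasFPowerSeriesAt_iff.mp hp] with x hx hxball hxsum
    set u : ℕ → ℂ := fun n => z * ((-1:ℂ)^n * x^n) / (n.factorial : ℂ) with hu
    set v : ℕ → ℂ := fun n => a n * x^n with hv
    have hun : Summable fun n => ‖u n‖ := by
      have h := (Real.summable_pow_div_factorial ‖x‖).mul_left ‖z‖
      apply Summable.of_nonneg_of_le (fun n => norm_nonneg _) _ h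
      intro n
      simp [hu, norm_div, norm_mul, norm_pow, mul_div_assoc, le_refl]
    have hvn : Summable fun n => ‖v n‖ := by
      have h := p.summable_norm_apply hxball
      apply Summable.of_nonneg_of_le (fun n => norm_nonneg _) _ h
      intro n
      have hap : p n (fun _ => x) = x ^ n • p.coeff n := p.apply_eq_pow_smul_coeff
      rw [hap]
      simp [hv, norm_mul, mul_comm, le_refl]
      exact le_rfl
    have hU : HasSum u (z * Complex.exp (-x)) := by
      have h := (NormedSpace.exp_series_hasSum_exp' (𝕂 := ℂ) (-x)).mul_left z
      rw [← Complex.exp_eq_exp_ℂ] at h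
      have hfun : u = fun n => z * ((n.factorial⁻¹ : ℂ) • (-x)^n) := by
        funext n
        rw [hu]
        simp only [smul_eq_mul]
        rw [neg_pow]
        ring
      rw [hfun]
      exact h
    have hV : HasSum v (f x) := by
      have hfun : v = fun n => x ^ n • p.coeff n := by
        funext n; rw [hv]; simp [smul_eq_mul, mul_comm]
        exact Or.inl rfl
      rw [hfun]
      simpa using hxsum
    have hw : Summable fun n => ∑ k ∈ Finset.range (n+1), u k * v (n - k) :=
      (summable_norm_sum_mul_range_of_summable_norm hun hvn).of_norm
    have hkey : z * Complex.exp (-x) * f x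
        = ∑' n, ∑ k ∈ Finset.range (n+1), u k * v (n-k) := by
      rw [← hU.tsum_eq, ← hV.tsum_eq]
      exact tsum_mul_tsum_eq_tsum_sum_range_of_summable_norm hun hvn
    have hW : HasSum (fun n => ∑ k ∈ Finset.range (n+1), u k * v (n-k))
        (z * Complex.exp (-x) * f x) := by
      rw [hkey]; exact hw.hasSum
    have hdelta : HasSum (fun n => if n = 0 then (1:ℂ) else 0) 1 := hasSum_ite_eq 0 1
    have hF := hW.add hdelta
    have hfx : z * Complex.exp (-x) * f x + 1 = f x := by
      rw [hfdef]
      simp only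
      field_simp
      ring
    have hterm : ∀ n, x ^ n • (FormalMultilinearSeries.ofScalars ℂ c').coeff n
        = (∑ k ∈ Finset.range (n+1), u k * v (n-k)) + (if n = 0 then (1:ℂ) else 0) := by
      intro n
      have hco : (FormalMultilinearSeries.ofScalars ℂ c').coeff n = c' n := by
        show (FormalMultilinearSeries.ofScalars ℂ c' n) (fun _ => (1:ℂ)) = c' n
        rw [FormalMultilinearSeries.ofScalars_apply_eq]
        simp
      rw [hco]
      have hrefl : ∑ k ∈ Finset.range (n+1), u (n - k) * v (n - (n - k))
          = ∑ k ∈ Finset.range (n+1), u k * v (n - k) :=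
        Finset.sum_range_reflect (fun k => u k * v (n - k)) (n+1)
      rw [← hrefl]
      have hsum : ∑ k ∈ Finset.range (n+1), u (n - k) * v (n - (n - k))
          = x ^ n * (z * S n) := by
        rw [hS]
        simp only
        rw [Finset.mul_sum, Finset.mul_sum]
        apply Finset.sum_congr rfl
        intro i hi
        have hin : i ≤ n := Nat.lt_succ_iff.mp (Finset.mem_range.mp hi)
        rw [Nat.sub_sub_self hin]
        have hxp : x^(n-i) * x^i = x^n := by rw [← pow_add, Nat.sub_add_cancel hin]
        calc u (n-i) * v i
            = (z * (((-1:ℂ)^(n-i) / ((n-i).factorial:ℂ)) * a i)) * (x^(n-i) * x^i) := by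
              rw [hu, hv]; simp only; ring
          _ = x ^ n * (z * (((-1:ℂ)^(n-i) / ((n-i).factorial:ℂ)) * a i)) := by
              rw [hxp]; ring
      rw [hsum, hc']
      simp only [smul_eq_mul]
      rcases eq_or_ne n 0 with h0 | h0
      · subst h0; simp
      · simp [h0]
    have hfun2 : (fun n => x ^ n • (FormalMultilinearSeries.ofScalars ℂ c').coeff n)
        = fun n => (∑ k ∈ Finset.range (n+1), u k * v (n-k)) + (if n = 0 then (1:ℂ) else 0) :=
      funext hterm
    rw [zero_add, hfun2, ← hfx]
    exact hF
  have huniq : p = FormalMultilinearSeries.ofScalars ℂ c' :=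
    hp.eq_formalMultilinearSeries hq
  have hac : ∀ n, a n = c' n := by
    intro n
    rw [ha]
    simp only
    rw [huniq]
    show (FormalMultilinearSeries.ofScalars ℂ c' n) (fun _ => (1:ℂ)) = c' n
    rw [FormalMultilinearSeries.ofScalars_apply_eq]
    simp
  constructor
  · have h0 := hac 0
    rw [hc', hS] at h0
    simp at h0
    rw [hcoeff 0, eq_div_iff h1z]
    linear_combination h0
  · intro n hn
    have hn0 : n ≠ 0 := Nat.one_le_iff_ne_zero.mp hn
    have h0 := hac n
    rw [hc'] at h0
    simp only [hn0, if_false, add_zero] at h0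
    have hSn : S n = (∑ k ∈ Finset.range n, ((-1:ℂ)^(n-k) / ((n-k).factorial : ℂ)) * a k)
        + a n := by
      rw [hS]
      simp only
      rw [Finset.sum_range_succ]
      simp
    rw [hSn] at h0
    rw [hcoeff n]
    have hgoal : ∑ k ∈ Finset.range n, ((-1:ℂ)^(n-k) / ((n-k).factorial : ℂ)) * cCoeff z k
        = ∑ k ∈ Finset.range n, ((-1:ℂ)^(n-k) / ((n-k).factorial : ℂ)) * a k := by
      apply Finset.sum_congr rfl
      intro k _
      rw [hcoeff k]
    rw [hgoal, div_mul_eq_mul_div, eq_div_iff h1z]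
    linear_combination h0
end

section
/- Let m ∈ ℕ with m ≥ 2 and let s ∈ ℂ with Re s > 0. Then Σ_{n=1}^{m−1} n^{−s} = m^{−s} [ (m−1) + Σ_{k=1}^∞ ( (B_{k+1}(m−1) − B_{k+1} + (k+1)(m−1)^k)/(k+1)! ) (s)_k / m^k ], where the series over k converges absolutely, n^{−s} = exp(−s log n), and m^{−s} = exp(−s log m). -/
open Complex Finset Filter

noncomputable def bc (s : ℂ) (k : ℕ) : ℂ :=
  (Polynomial.eval s (ascPochhammer ℂ k)) / (k.factorial : ℂ)

lemma bc_zero (s : ℂ) : bc s 0 = 1 := by simp [bc]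

lemma bc_succ (s : ℂ) (k : ℕ) : bc s (k + 1) * (k + 1) = bc s k * (s + k) := by
  have hk : ((k.factorial : ℂ)) ≠ 0 := by exact_mod_cast k.factorial_ne_zero
  have hk1 : ((k : ℂ) + 1) ≠ 0 := Nat.cast_add_one_ne_zero k
  simp only [bc, ascPochhammer_succ_eval, Nat.factorial_succ]
  push_cast
  field_simp

lemma norm_bc_succ (s : ℂ) (k : ℕ) :
    ‖bc s (k + 1)‖ * (k + 1) = ‖bc s k‖ * ‖s + k‖ := by
  have := congrArg (‖·‖) (bc_succ s k)
  simp only [norm_mul] at this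
  rw [show ((k : ℂ) + 1) = ((k + 1 : ℕ) : ℂ) by push_cast; ring,
    Complex.norm_natCast] at this
  push_cast at this
  linarith [this]

lemma ratio_eventually (s : ℂ) {x r : ℝ} (hx : 0 ≤ x) (hxr : x < r) :
    ∀ᶠ k : ℕ in atTop, ‖s + (k : ℂ)‖ * x ≤ r * k := by
  obtain ⟨N, hN⟩ := exists_nat_ge (‖s‖ * x / (r - x))
  filter_upwards [eventually_ge_atTop N] with k hk
  have h1 : ‖s + (k : ℂ)‖ ≤ ‖s‖ + k := by
    calc ‖s + (k : ℂ)‖ ≤ ‖s‖ + ‖(k : ℂ)‖ := norm_add_le _ _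
    _ = ‖s‖ + k := by simp
  have hrx : 0 < r - x := by linarith
  have h2 : ‖s‖ * x ≤ (k : ℝ) * (r - x) := by
    have hNk : (‖s‖ * x / (r - x)) ≤ (k : ℝ) := le_trans hN (by exact_mod_cast hk)
    calc ‖s‖ * x = (‖s‖ * x / (r - x)) * (r - x) := by field_simp
    _ ≤ (k : ℝ) * (r - x) := by nlinarith
  nlinarith [norm_nonneg s, (Nat.cast_nonneg k : (0:ℝ) ≤ k)]

lemma sumA (s : ℂ) {x : ℝ} (hx : 0 ≤ x) (hx1 : x < 1) :
    Summable (fun k : ℕ => ‖bc s k‖ * x ^ k) := by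
  set r : ℝ := (x + 1) / 2 with hr
  have hxr : x < r := by rw [hr]; linarith
  have hr1 : r < 1 := by rw [hr]; linarith
  have hr0 : 0 < r := by rw [hr]; linarith
  apply summable_of_ratio_norm_eventually_le hr1
  filter_upwards [ratio_eventually s hx hxr] with k hk
  have hkp : (0:ℝ) < k + 1 := by positivity
  have hb : ‖bc s (k+1)‖ = ‖bc s k‖ * ‖s + k‖ / (k + 1) := by
    rw [eq_div_iff hkp.ne']; exact norm_bc_succ s k
  have hbd : ‖bc s (k+1)‖ * x ^ (k+1) ≤ r * (‖bc s k‖ * x ^ k) := by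
    rw [hb, pow_succ]
    rw [div_mul_eq_mul_div, div_le_iff₀ hkp]
    have hx' : ‖s + (k:ℂ)‖ * x ≤ r * (k + 1) := le_trans hk (by nlinarith [Nat.cast_nonneg (α := ℝ) k])
    calc ‖bc s k‖ * ‖s + (k:ℂ)‖ * (x ^ k * x)
        = (‖bc s k‖ * x ^ k) * (‖s + (k:ℂ)‖ * x) := by ring
      _ ≤ (‖bc s k‖ * x ^ k) * (r * (k + 1)) := by
          apply mul_le_mul_of_nonneg_left hx' (by positivity)
      _ = r * (‖bc s k‖ * x ^ k) * (k + 1) := by ring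
  have e1 : (0:ℝ) ≤ ‖bc s (k+1)‖ * x ^ (k+1) := by positivity
  have e2 : (0:ℝ) ≤ ‖bc s k‖ * x ^ k := by positivity
  calc ‖‖bc s (k+1)‖ * x ^ (k+1)‖ = ‖bc s (k+1)‖ * x ^ (k+1) := by
        rw [Real.norm_eq_abs, _root_.abs_of_nonneg e1]
    _ ≤ r * (‖bc s k‖ * x ^ k) := hbd
    _ = r * ‖‖bc s k‖ * x ^ k‖ := by rw [Real.norm_eq_abs, _root_.abs_of_nonneg e2]

lemma sumB (s : ℂ) {x : ℝ} (hx : 0 ≤ x) (hx1 : x < 1) :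
    Summable (fun k : ℕ => (k : ℝ) * ‖bc s k‖ * x ^ k) := by
  set r : ℝ := (x + 1) / 2 with hr
  have hxr : x < r := by rw [hr]; linarith
  have hr1 : r < 1 := by rw [hr]; linarith
  apply summable_of_ratio_norm_eventually_le hr1
  filter_upwards [ratio_eventually s hx hxr] with k hk
  have hkp : (0:ℝ) < k + 1 := by positivity
  have hb : ‖bc s (k+1)‖ = ‖bc s k‖ * ‖s + k‖ / (k + 1) := by
    rw [eq_div_iff hkp.ne']; exact norm_bc_succ s k
  have hbd : ((k:ℝ)+1) * ‖bc s (k+1)‖ * x ^ (k+1) ≤ r * ((k:ℝ) * ‖bc s k‖ * x ^ k) := by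
    rw [hb, pow_succ]
    have : ((k:ℝ)+1) * (‖bc s k‖ * ‖s + (k:ℂ)‖ / (k + 1)) * (x ^ k * x)
        = (‖bc s k‖ * x ^ k) * (‖s + (k:ℂ)‖ * x) := by field_simp
    rw [this]
    calc (‖bc s k‖ * x ^ k) * (‖s + (k:ℂ)‖ * x)
        ≤ (‖bc s k‖ * x ^ k) * (r * k) := by
          apply mul_le_mul_of_nonneg_left hk (by positivity)
      _ = r * ((k:ℝ) * ‖bc s k‖ * x ^ k) := by ring
  have e1 : (0:ℝ) ≤ ((k+1 : ℕ):ℝ) * ‖bc s (k+1)‖ * x ^ (k+1) := by positivity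
  have e2 : (0:ℝ) ≤ (k:ℝ) * ‖bc s k‖ * x ^ k := by positivity
  calc ‖((k+1 : ℕ):ℝ) * ‖bc s (k+1)‖ * x ^ (k+1)‖
      = ((k:ℝ)+1) * ‖bc s (k+1)‖ * x ^ (k+1) := by
        rw [Real.norm_eq_abs, _root_.abs_of_nonneg e1]; push_cast; ring
    _ ≤ r * ((k:ℝ) * ‖bc s k‖ * x ^ k) := hbd
    _ = r * ‖(k:ℝ) * ‖bc s k‖ * x ^ k‖ := by rw [Real.norm_eq_abs, _root_.abs_of_nonneg e2]

noncomputable def gf (s : ℂ) (k : ℕ) (z : ℝ) : ℂ := bc s k * (z : ℂ) ^ k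
noncomputable def gf' (s : ℂ) (k : ℕ) (y : ℝ) : ℂ := bc s k * ((k : ℂ) * (y : ℂ) ^ (k - 1))
noncomputable def Ff (s : ℂ) (z : ℝ) : ℂ := ∑' k, gf s k z

lemma binom (s : ℂ) {x : ℝ} (hx0 : 0 < x) (hx1 : x < 1) :
    HasSum (fun k : ℕ => bc s k * (x : ℂ) ^ k) (((1 - x : ℝ) : ℂ) ^ (-s)) := by
  set b : ℝ := (x + 1) / 2 with hbdef
  have hb0 : 0 < b := by rw [hbdef]; linarith
  have hb1 : b < 1 := by rw [hbdef]; linarith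
  have hxb : x < b := by rw [hbdef]; linarith
  have hu : Summable (fun k : ℕ => ‖bc s k‖ * ((k : ℝ) * b ^ (k - 1))) := by
    refine Summable.of_nonneg_of_le (fun k => by positivity) ?_
      ((sumB s hb0.le hb1).mul_left b⁻¹)
    · intro k
      cases k with
      | zero => simp
      | succ n =>
        have hpow : b ^ (n + 1 - 1) = b⁻¹ * b ^ (n+1) := by
          rw [pow_succ, Nat.add_sub_cancel]; field_simp
        rw [hpow]; ring_nf; exact le_refl _
  have hnorm : ∀ (k : ℕ) (y : ℝ), ‖gf s k y‖ = ‖bc s k‖ * |y| ^ k := by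
    intro k y
    simp [gf, norm_mul, norm_pow, Complex.norm_real, Real.norm_eq_abs]
  have hnorm' : ∀ (k : ℕ) (y : ℝ), ‖gf' s k y‖ = ‖bc s k‖ * ((k : ℝ) * |y| ^ (k - 1)) := by
    intro k y
    simp [gf', norm_mul, norm_pow, Complex.norm_real, Real.norm_eq_abs, Complex.norm_natCast]
  have hg : ∀ (k : ℕ), ∀ y ∈ Set.Ioo (-b) b, HasDerivAt (gf s k) (gf' s k y) y := by
    intro k y _
    exact ((hasDerivAt_pow k ((y : ℝ) : ℂ)).comp_ofReal).const_mul (bc s k)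
  have hg' : ∀ (k : ℕ), ∀ y ∈ Set.Ioo (-b) b,
      ‖gf' s k y‖ ≤ ‖bc s k‖ * ((k : ℝ) * b ^ (k - 1)) := by
    intro k y hy
    rw [hnorm']
    have hyb : |y| ≤ b := le_of_lt (abs_lt.2 ⟨hy.1, hy.2⟩)
    have hpp : |y| ^ (k-1) ≤ b ^ (k-1) := pow_le_pow_left₀ (abs_nonneg y) hyb _
    exact mul_le_mul_of_nonneg_left
      (mul_le_mul_of_nonneg_left hpp (Nat.cast_nonneg k)) (norm_nonneg _)
  have h0t : (0:ℝ) ∈ Set.Ioo (-b) b := Set.mem_Ioo.2 ⟨by linarith, hb0⟩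
  have hxt : x ∈ Set.Ioo (-b) b := Set.mem_Ioo.2 ⟨by linarith, hxb⟩
  have hg0 : Summable fun k => gf s k 0 := by
    apply summable_of_ne_finset_zero (s := {0})
    intro k hk
    simp only [Finset.mem_singleton] at hk
    simp [gf, zero_pow hk]
  have hF' : ∀ y ∈ Set.Ioo (-b) b, HasDerivAt (Ff s) (∑' k, gf' s k y) y := by
    intro y hy
    exact hasDerivAt_tsum_of_isPreconnected hu isOpen_Ioo
      (convex_Ioo _ _).isPreconnected hg hg' h0t hg0 hy
  have habs : ∀ y ∈ Set.Ioo (-b) b, |y| < b := fun y hy => abs_lt.2 ⟨hy.1, hy.2⟩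
  have hS1 : ∀ y ∈ Set.Ioo (-b) b, Summable (fun k : ℕ => gf s k y) := by
    intro y hy
    apply Summable.of_norm_bounded (sumA s (abs_nonneg y) (lt_trans (habs y hy) hb1))
    intro k; rw [hnorm k y]
  have hS2 : ∀ y ∈ Set.Ioo (-b) b,
      Summable (fun k : ℕ => (k : ℂ) * bc s k * (y:ℂ) ^ k) := by
    intro y hy
    apply Summable.of_norm_bounded (sumB s (abs_nonneg y) (lt_trans (habs y hy) hb1))
    intro k
    simp only [norm_mul, norm_pow, Complex.norm_real, Real.norm_eq_abs, Complex.norm_natCast]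
    exact le_of_eq (by ring)
  have hSg' : ∀ y ∈ Set.Ioo (-b) b, Summable (fun k : ℕ => gf' s k y) :=
    fun y hy => Summable.of_norm_bounded hu (fun k => hg' k y hy)
  have hkey : ∀ y ∈ Set.Ioo (-b) b,
      ((1:ℂ) - (y:ℝ)) * (∑' k, gf' s k y) = s * Ff s y := by
    intro y hy
    have hterm : ∀ k : ℕ, gf' s (k+1) y = bc s k * (s + k) * (y:ℂ) ^ k := by
      intro k
      have e1 : gf' s (k+1) y = (bc s (k+1) * ((k:ℂ)+1)) * (y:ℂ) ^ k := by
        simp only [gf', Nat.add_sub_cancel]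
        push_cast
        ring
      rw [e1, bc_succ]
    have heq : (fun k : ℕ => bc s k * (s + k) * (y:ℂ) ^ k)
        = fun k : ℕ => s * (gf s k y) + (k : ℂ) * bc s k * (y:ℂ) ^ k := by
      funext k; simp only [gf]; ring
    have h1 : Summable (fun k : ℕ => s * (gf s k y)) := (hS1 y hy).mul_left s
    have hSP : Summable (fun k : ℕ => bc s k * (s + k) * (y:ℂ) ^ k) := by
      rw [heq]; exact h1.add (hS2 y hy)
    have hD : (∑' k, gf' s k y) = ∑' (k : ℕ), bc s k * (s + k) * (y:ℂ) ^ k := by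
      rw [Summable.tsum_eq_zero_add (hSg' y hy)]
      have e0 : gf' s 0 y = 0 := by simp [gf']
      rw [e0, zero_add]
      exact tsum_congr hterm
    have hsplit : (∑' (k : ℕ), bc s k * (s + k) * (y:ℂ) ^ k)
        = s * Ff s y + ∑' (k : ℕ), (k : ℂ) * bc s k * (y:ℂ) ^ k := by
      rw [heq, Summable.tsum_add h1 (hS2 y hy), tsum_mul_left]
      rfl
    have hE : (∑' (k : ℕ), (k : ℂ) * bc s k * (y:ℂ) ^ k)
        = (y:ℂ) * ∑' (k : ℕ), bc s k * (s + k) * (y:ℂ) ^ k := by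
      rw [Summable.tsum_eq_zero_add (hS2 y hy)]
      simp only [Nat.cast_zero, zero_mul, pow_zero, mul_one, zero_add]
      rw [← tsum_mul_left]
      apply tsum_congr
      intro k
      calc ((k+1 : ℕ) : ℂ) * bc s (k+1) * (y:ℂ) ^ (k+1)
          = (bc s (k+1) * ((k:ℂ)+1)) * (y:ℂ) ^ k * (y:ℂ) := by rw [pow_succ]; push_cast; ring
        _ = (bc s k * (s + k)) * (y:ℂ) ^ k * (y:ℂ) := by rw [bc_succ]
        _ = (y:ℂ) * (bc s k * (s + (k:ℂ)) * (y:ℂ) ^ k) := by ring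
    rw [hD]
    linear_combination hsplit + hE
  have hG : ∀ y ∈ Set.Ioo (-b) b,
      HasDerivAt (fun z : ℝ => Ff s z * ((1:ℂ) - (z:ℝ)) ^ s) 0 y := by
    intro y hy
    have hy1 : y < 1 := lt_trans hy.2 hb1
    have h1y : ((1:ℂ) - (y:ℝ)) ≠ 0 := by
      rw [show ((1:ℂ) - (y:ℝ)) = (((1 - y : ℝ)) : ℂ) by push_cast; ring]
      exact_mod_cast ne_of_gt (by linarith : (0:ℝ) < 1 - y)
    have hslit : ((1:ℂ) - (y:ℝ)) ∈ Complex.slitPlane := by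
      apply Complex.mem_slitPlane_iff.2
      left
      simp only [Complex.sub_re, Complex.one_re, Complex.ofReal_re]
      linarith
    have hinner : HasDerivAt (fun z : ℝ => (1:ℂ) - (z:ℝ)) (-1) y := by
      simpa using ((hasDerivAt_id ((y : ℝ) : ℂ)).comp_ofReal).const_sub 1
    have hC : HasDerivAt (fun w : ℂ => ((1:ℂ) - w) ^ s)
        (s * ((1:ℂ) - (y:ℝ)) ^ (s - 1) * (-1)) ((y:ℝ) : ℂ) :=
      HasDerivAt.cpow_const ((hasDerivAt_id' ((y:ℝ):ℂ)).const_sub 1) hslit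
    have hpow : HasDerivAt (fun z : ℝ => ((1:ℂ) - (z:ℝ)) ^ s)
        (s * ((1:ℂ) - (y:ℝ)) ^ (s - 1) * (-1)) y := hC.comp_ofReal
    have hmul := (hF' y hy).mul hpow
    have hval : (∑' k, gf' s k y) * ((1:ℂ) - (y:ℝ)) ^ s
        + Ff s y * (s * ((1:ℂ) - (y:ℝ)) ^ (s - 1) * (-1)) = 0 := by
      have hpows : ((1:ℂ) - (y:ℝ)) ^ s = ((1:ℂ) - (y:ℝ)) ^ (s - 1) * ((1:ℂ) - (y:ℝ)) := by
        have e : ((1:ℂ) - (y:ℝ)) ^ s = ((1:ℂ) - (y:ℝ)) ^ ((s - 1) + 1) := by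
          rw [sub_add_cancel]
        rw [e, Complex.cpow_add _ _ h1y, Complex.cpow_one]
      rw [hpows]
      calc (∑' k, gf' s k y) * (((1:ℂ) - (y:ℝ)) ^ (s-1) * ((1:ℂ) - (y:ℝ)))
          + Ff s y * (s * ((1:ℂ) - (y:ℝ)) ^ (s-1) * (-1))
          = ((1:ℂ) - (y:ℝ)) ^ (s-1)
            * (((1:ℂ) - (y:ℝ)) * (∑' k, gf' s k y) - s * Ff s y) := by ring
        _ = 0 := by rw [hkey y hy]; ring
    rw [← hval]
    exact hmul
  have hconst : Ff s x * ((1:ℂ) - (x:ℝ)) ^ s = Ff s 0 * ((1:ℂ) - ((0:ℝ):ℂ)) ^ s := by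
    exact (convex_Ioo (-b) b).is_const_of_fderivWithin_eq_zero
      (fun y hy => ((hG y hy).differentiableAt).differentiableWithinAt)
      (fun y hy => by
        rw [fderivWithin_of_isOpen isOpen_Ioo hy, (hG y hy).hasFDerivAt.fderiv]
        ext z
        simp) hxt h0t
  have hF0 : Ff s 0 = 1 := by
    rw [Ff]
    rw [tsum_eq_single 0 (fun k hk => by simp [gf, zero_pow hk])]
    simp [gf, bc_zero]
  have hGx : Ff s x * ((1:ℂ) - (x:ℝ)) ^ s = 1 := by
    rw [hconst, hF0]
    norm_num
  have hbase : ((1:ℂ) - (x:ℝ)) = (((1 - x : ℝ)) : ℂ) := by push_cast; ring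
  have hFx : Ff s x = (((1 - x : ℝ)) : ℂ) ^ (-s) := by
    rw [Complex.cpow_neg]
    rw [hbase] at hGx
    exact eq_inv_of_mul_eq_one_left (by linear_combination hGx)
  have hfinal := (hS1 x hxt).hasSum
  rw [show (∑' k, gf s k x) = (((1 - x : ℝ)) : ℂ) ^ (-s) from hFx] at hfinal
  exact hfinal

open scoped BigOperators

theorem stmt13 (m : ℕ) (hm : 2 ≤ m) (s : ℂ) (hs : 0 < s.re) :
    Summable (fun k : ℕ =>
      ‖((Polynomial.aeval ((m : ℂ) - 1) (Polynomial.bernoulli (k + 2))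
            - ((bernoulli (k + 2) : ℚ) : ℂ)
            + ((k : ℂ) + 2) * ((m : ℂ) - 1) ^ (k + 1)) / ((k + 2).factorial : ℂ)) *
          (ascPochhammer ℂ (k + 1)).eval s / (m : ℂ) ^ (k + 1)‖) ∧
    ∑ n ∈ Finset.Icc 1 (m - 1), (n : ℂ) ^ (-s)
      = (m : ℂ) ^ (-s) *
          (((m : ℂ) - 1)
            + ∑' k : ℕ,
                ((Polynomial.aeval ((m : ℂ) - 1) (Polynomial.bernoulli (k + 2))
                      - ((bernoulli (k + 2) : ℚ) : ℂ)
                      + ((k : ℂ) + 2) * ((m : ℂ) - 1) ^ (k + 1)) / ((k + 2).factorial : ℂ)) *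
                  (ascPochhammer ℂ (k + 1)).eval s / (m : ℂ) ^ (k + 1)) := by
  have hm1 : 1 ≤ m := le_trans (by norm_num) hm
  have hmR : (0:ℝ) < m := by exact_mod_cast lt_of_lt_of_le (by norm_num) hm
  have hmC : (m : ℂ) ≠ 0 := by exact_mod_cast (Nat.cast_pos.2 (by omega : 0 < m)).ne'
  -- per n facts
  have hxfacts : ∀ n ∈ Finset.Icc 1 (m-1),
      0 < ((m - n : ℕ) : ℝ) / m ∧ ((m - n : ℕ) : ℝ) / m < 1 := by
    intro n hn
    rw [Finset.mem_Icc] at hn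
    have h1 : 1 ≤ m - n := by omega
    have h2 : m - n ≤ m - 1 := by omega
    constructor
    · apply div_pos _ hmR
      exact_mod_cast Nat.cast_pos.2 (by omega : 0 < m - n)
    · rw [div_lt_one hmR]
      exact_mod_cast Nat.cast_lt.2 (by omega : m - n < m)
  have hbase : ∀ n ∈ Finset.Icc 1 (m-1),
      ((1 - ((m - n : ℕ) : ℝ) / m : ℝ) : ℂ) = ((n : ℝ) / m : ℝ) := by
    intro n hn
    rw [Finset.mem_Icc] at hn
    have hcast : ((m - n : ℕ) : ℝ) = (m : ℝ) - n := by
      rw [Nat.cast_sub (by omega : n ≤ m)]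
    congr 1
    rw [hcast]
    field_simp
    ring
  have hsum : ∀ n ∈ Finset.Icc 1 (m-1),
      HasSum (fun k : ℕ => bc s k * ((((m - n : ℕ) : ℝ) / m : ℝ) : ℂ) ^ k)
        ((((n:ℝ)/m : ℝ) : ℂ) ^ (-s)) := by
    intro n hn
    have := binom s (hxfacts n hn).1 (hxfacts n hn).2
    rwa [hbase n hn] at this
  have hcpow : ∀ n ∈ Finset.Icc 1 (m-1),
      (n : ℂ) ^ (-s) = (m : ℂ) ^ (-s) * ((((n:ℝ)/m : ℝ) : ℂ) ^ (-s)) := by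
    intro n hn
    rw [Finset.mem_Icc] at hn
    have h1 : (0:ℝ) ≤ (n : ℝ)/m := by positivity
    have h2 : (0:ℝ) ≤ (m : ℝ) := hmR.le
    have key := Complex.mul_cpow_ofReal_nonneg h1 h2 (-s)
    have hnm : (((n:ℝ)/m : ℝ) : ℂ) * ((m : ℝ) : ℂ) = (n : ℂ) := by
      push_cast
      field_simp
    rw [show ((((n:ℝ)/m : ℝ)) : ℂ) * ((m:ℝ) : ℂ) = ((((n:ℝ)/m : ℝ)) : ℂ) * ((m:ℝ) : ℂ) from rfl] at key
    rw [← hnm]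
    push_cast at key ⊢
    rw [key]
    ring
  -- Summability of each series and norms
  have hSn : ∀ n ∈ Finset.Icc 1 (m-1),
      Summable (fun k : ℕ => bc s k * ((((m - n : ℕ) : ℝ) / m : ℝ) : ℂ) ^ k) :=
    fun n hn => (hsum n hn).summable
  have hNA : ∀ n ∈ Finset.Icc 1 (m-1),
      Summable (fun k : ℕ => ‖bc s k * ((((m - n : ℕ) : ℝ) / m : ℝ) : ℂ) ^ k‖) := by
    intro n hn
    have heq : ∀ k : ℕ, ‖bc s k * ((((m - n : ℕ) : ℝ) / m : ℝ) : ℂ) ^ k‖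
        = ‖bc s k‖ * (((m - n : ℕ) : ℝ) / m) ^ k := by
      intro k
      rw [norm_mul, norm_pow, Complex.norm_real, Real.norm_eq_abs,
        _root_.abs_of_nonneg (hxfacts n hn).1.le]
    exact Summable.congr (sumA s (hxfacts n hn).1.le (hxfacts n hn).2) (fun k => (heq k).symm)
  -- A k
  set A : ℕ → ℂ := fun k => ∑ n ∈ Finset.Icc 1 (m-1),
    bc s k * ((((m - n : ℕ) : ℝ) / m : ℝ) : ℂ) ^ k with hAdef
  have hSA : Summable A := summable_sum (fun n hn => hSn n hn)
  have hA0 : A 0 = (m : ℂ) - 1 := by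
    rw [hAdef]
    simp only [pow_zero, mul_one, bc_zero, Finset.sum_const, Nat.card_Icc, nsmul_eq_mul, mul_one]
    rw [show m - 1 + 1 - 1 = m - 1 from by omega]
    push_cast [Nat.cast_sub hm1]
    ring
  -- key identity: A (K+1) equals the statement's K-th term
  have hAk : ∀ K : ℕ, A (K+1)
      = ((Polynomial.aeval ((m : ℂ) - 1) (Polynomial.bernoulli (K + 2))
            - ((bernoulli (K + 2) : ℚ) : ℂ)
            + ((K : ℂ) + 2) * ((m : ℂ) - 1) ^ (K + 1)) / ((K + 2).factorial : ℂ)) *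
          (ascPochhammer ℂ (K + 1)).eval s / (m : ℂ) ^ (K + 1) := by
    intro K
    -- reindexing the sum of powers
    have hre : ∑ n ∈ Finset.Icc 1 (m-1), ((((m - n : ℕ) : ℝ) / m : ℝ) : ℂ)^(K+1)
        = (∑ j ∈ Finset.Icc 1 (m-1), ((j:ℕ):ℂ)^(K+1)) / (m:ℂ)^(K+1) := by
      rw [Finset.sum_div]
      refine Finset.sum_nbij' (fun n => m - n) (fun n => m - n)
        (fun a ha => ?_) (fun a ha => ?_) (fun a ha => ?_) (fun a ha => ?_) (fun a ha => ?_)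
      · rw [Finset.mem_Icc] at ha ⊢; omega
      · rw [Finset.mem_Icc] at ha ⊢; omega
      · rw [Finset.mem_Icc] at ha; omega
      · rw [Finset.mem_Icc] at ha; omega
      · rw [Complex.ofReal_div, div_pow]
        norm_num
    -- Faulhaber over ℚ
    have hQ : ((K:ℚ)+2) * (∑ j ∈ Finset.Icc 1 (m-1), (j:ℚ)^(K+1))
        = (Polynomial.bernoulli (K+2)).eval (((m-1:ℕ)):ℚ) - bernoulli (K+2)
          + ((K:ℚ)+2) * ((m-1:ℕ):ℚ)^(K+1) := by
      have hB := Polynomial.bernoulli_succ_eval (m-1) (K+1)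
      norm_num [Nat.succ_eq_add_one] at hB
      rw [show K + 1 + 1 = K + 2 from by omega] at hB
      push_cast at hB
      have hIco : Finset.Ico 1 m = Finset.Icc 1 (m-1) := by
        rw [show m = m-1+1 from by omega, Finset.Ico_add_one_right_eq_Icc]
        congr 1
      have h1 : ∑ j ∈ Finset.range m, (j:ℚ)^(K+1)
          = ∑ j ∈ Finset.Icc 1 (m-1), (j:ℚ)^(K+1) := by
        rw [Finset.range_eq_Ico, Finset.sum_eq_sum_Ico_succ_bot (by omega : 0 < m), hIco]
        norm_num
      have h2 : ∑ j ∈ Finset.range m, (j:ℚ)^(K+1)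
          = ∑ j ∈ Finset.range (m-1), (j:ℚ)^(K+1) + ((m-1:ℕ):ℚ)^(K+1) := by
        have hm' : m = (m-1)+1 := by omega
        rw [show (Finset.range m) = Finset.range ((m-1)+1) from by rw [← hm']]
        rw [Finset.sum_range_succ]
      rw [← h1, h2]
      linear_combination -hB
    -- cast the Faulhaber identity to ℂ
    have haeval : Polynomial.aeval ((m:ℂ)-1) (Polynomial.bernoulli (K+2))
        = (((Polynomial.bernoulli (K+2)).eval (((m-1:ℕ)):ℚ) : ℚ) : ℂ) := by
      have h1 : ((m:ℂ)-1) = algebraMap ℚ ℂ (((m-1:ℕ)):ℚ) := by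
        rw [eq_ratCast]
        push_cast [Nat.cast_sub hm1]
        ring
      rw [h1, Polynomial.aeval_algebraMap_apply]
      rw [eq_ratCast]
      norm_num
    have hC : ((K:ℂ)+2) * (∑ j ∈ Finset.Icc 1 (m-1), (j:ℂ)^(K+1))
        = Polynomial.aeval ((m:ℂ)-1) (Polynomial.bernoulli (K+2)) - ((bernoulli (K+2) : ℚ) : ℂ)
          + ((K:ℂ)+2) * ((m:ℂ)-1)^(K+1) := by
      have hcast := congrArg (fun q : ℚ => (q : ℂ)) hQ
      push_cast [Nat.cast_sub hm1] at hcast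
      rw [haeval]
      push_cast [Nat.cast_sub hm1]
      linear_combination hcast
    -- algebra
    have hfac : (((K+2).factorial : ℂ)) = ((K:ℂ)+2) * ((K+1).factorial : ℂ) := by
      rw [show (K+2) = (K+1)+1 from rfl, Nat.factorial_succ]
      push_cast
      ring
    have hfacne : (((K+1).factorial : ℂ)) ≠ 0 := by
      exact_mod_cast (K+1).factorial_ne_zero
    have hK2ne : ((K:ℂ)+2) ≠ 0 := by
      intro h
      have : ((K:ℂ)+2).re = 0 := by rw [h]; rfl
      simp [Complex.add_re] at this
      nlinarith [(Nat.cast_nonneg K : (0:ℝ) ≤ K)]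
    have hmpne : ((m:ℂ))^(K+1) ≠ 0 := pow_ne_zero _ hmC
    rw [hAdef]
    simp only []
    rw [← Finset.mul_sum, hre]
    rw [← hC]
    rw [hfac]
    rw [bc]
    field_simp
  -- conclusion
  constructor
  · -- summability of norms
    have hU : Summable (fun K : ℕ => ∑ n ∈ Finset.Icc 1 (m-1),
        ‖bc s (K+1) * ((((m - n : ℕ) : ℝ) / m : ℝ) : ℂ) ^ (K+1)‖) := by
      apply summable_sum
      intro n hn
      exact (summable_nat_add_iff 1).2 (hNA n hn)
    refine Summable.of_nonneg_of_le (fun K => norm_nonneg _) (fun K => ?_) hU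
    rw [← hAk K, hAdef]
    exact norm_sum_le _ _
  · -- the identity
    have hL : ∑ n ∈ Finset.Icc 1 (m - 1), (n : ℂ) ^ (-s)
        = (m : ℂ) ^ (-s) * ∑' k, A k := by
      rw [Summable.tsum_finsetSum (fun n hn => hSn n hn), Finset.mul_sum]
      apply Finset.sum_congr rfl
      intro n hn
      rw [hcpow n hn, ← (hsum n hn).tsum_eq]
    rw [hL, Summable.tsum_eq_zero_add hSA, hA0]
    congr 1
    congr 1
    exact tsum_congr (fun K => hAk K)
end
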